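/- arXiv:math/0509646 — 9 statements merged into one kernel-verified Lean document; each statement's English description precedes it below -/
import Mathlib

section
/- Let A be a commutative ring with no nontrivial idempotents, and let a be a unit of the Laurent series ring A((t)). Then there exists an integer n such that the coefficient of t^n in a is a unit of A and the coefficient of t^i in a is nilpotent for every integer i < n. -/
open HahnSeries PrimeSpectrum

/-- Mapping Laurent series coefficientwise by a ring hom is multiplicative. -/
lemma laurent_map_mul {A B : Type*} [CommRing A] [CommRing B] (f : A →+* B)
    (x y : LaurentSeries A) : (x * y).map f = x.map f * y.map f := by
  have h := HahnSeries.map_mul (Γ := ℤ) (f.toNonUnitalRingHom) (x := x) (y := y)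
  have hc : ∀ z : LaurentSeries A, z.map (f.toNonUnitalRingHom) = z.map f := by
    intro z; ext g; simp only [HahnSeries.map_coeff]; rfl
  rw [hc, hc, hc] at h
  exact h

/-- Mapping Laurent series coefficientwise by a ring hom sends 1 to 1. -/
lemma laurent_map_one {A B : Type*} [CommRing A] [CommRing B] (f : A →+* B) :
    (1 : LaurentSeries A).map f = 1 := by
  ext g
  simp only [HahnSeries.map_coeff, HahnSeries.coeff_one]
  split <;> simp

/-- For `u * v = 1`, the order of the image of `u` in a domain is characterized by
nonvanishing of two coefficients. -/
lemma laurent_order_eq_iff {A B : Type*} [CommRing A] [CommRing B] [IsDomain B]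
    (f : A →+* B) (u v : LaurentSeries A) (huv : u * v = 1) (n : ℤ) :
    (u.map f).order = n ↔ f (u.coeff n) ≠ 0 ∧ f (v.coeff (-n)) ≠ 0 := by
  set ub := u.map f with hub
  set vb := v.map f with hvb
  have hm : ub * vb = 1 := by rw [hub, hvb, ← laurent_map_mul, huv, laurent_map_one]
  have hu0 : ub ≠ 0 := left_ne_zero_of_mul_eq_one hm
  have hv0 : vb ≠ 0 := right_ne_zero_of_mul_eq_one hm
  have hord : ub.order + vb.order = 0 := by
    rw [← HahnSeries.order_mul hu0 hv0, hm, HahnSeries.order_one]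
  constructor
  · intro h
    constructor
    · have := HahnSeries.coeff_order_eq_zero.not.mpr hu0
      rw [h] at this
      simpa [hub, HahnSeries.map_coeff] using this
    · have hv : vb.order = -n := by omega
      have := HahnSeries.coeff_order_eq_zero.not.mpr hv0
      rw [hv] at this
      simpa [hvb, HahnSeries.map_coeff] using this
  · rintro ⟨h1, h2⟩
    have hle1 : ub.order ≤ n := HahnSeries.order_le_of_coeff_ne_zero (by
      simpa [hub, HahnSeries.map_coeff] using h1)
    have hle2 : vb.order ≤ -n := HahnSeries.order_le_of_coeff_ne_zero (by
      simpa [hvb, HahnSeries.map_coeff] using h2)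
    omega

/-- Lemma 4.3.4(a): if `A` is a commutative ring with no nontrivial idempotents,
then any unit `a` of the Laurent series ring `A((t))` admits an integer `n` such
that the coefficient of `t^n` is a unit of `A` and all lower coefficients are
nilpotent. -/
theorem laurent_unit_order_exists (A : Type*) [CommRing A]
    (hA : ∀ e : A, IsIdempotentElem e → e = 0 ∨ e = 1)
    (a : (LaurentSeries A)ˣ) :
    ∃ n : ℤ, IsUnit ((a : LaurentSeries A).coeff n) ∧
      ∀ i : ℤ, i < n → IsNilpotent ((a : LaurentSeries A).coeff i) := by
  rcases subsingleton_or_nontrivial A with hS | hN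
  · exact ⟨0, isUnit_of_subsingleton _, fun i _ => ⟨1, Subsingleton.elim _ _⟩⟩
  set u : LaurentSeries A := (a : LaurentSeries A) with hu
  set v : LaurentSeries A := ((a⁻¹ : (LaurentSeries A)ˣ) : LaurentSeries A) with hv
  have huv : u * v = 1 := a.mul_inv
  -- the order function on the prime spectrum
  set N : PrimeSpectrum A → ℤ := fun p =>
    (u.map (Ideal.Quotient.mk p.asIdeal)).order with hN
  have key : ∀ (p : PrimeSpectrum A) (n : ℤ),
      N p = n ↔ u.coeff n ∉ p.asIdeal ∧ v.coeff (-n) ∉ p.asIdeal := by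
    intro p n
    haveI : p.asIdeal.IsPrime := p.2
    rw [hN]
    simp only
    rw [laurent_order_eq_iff (Ideal.Quotient.mk p.asIdeal) u v huv n]
    simp [Ideal.Quotient.eq_zero_iff_mem]
  -- each fiber of N is open
  have hopen : ∀ n : ℤ, IsOpen {p : PrimeSpectrum A | N p = n} := by
    intro n
    have : {p : PrimeSpectrum A | N p = n} =
        (basicOpen (u.coeff n) : Set (PrimeSpectrum A)) ∩
          (basicOpen (v.coeff (-n)) : Set (PrimeSpectrum A)) := by
      ext p
      simp only [Set.mem_setOf_eq, Set.mem_inter_iff, SetLike.mem_coe, mem_basicOpen]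
      exact key p n
    rw [this]
    exact ((basicOpen (u.coeff n)).2).inter ((basicOpen (v.coeff (-n))).2)
  -- N is constant since Spec A is connected
  obtain ⟨p₀⟩ : Nonempty (PrimeSpectrum A) := inferInstance
  set n₀ : ℤ := N p₀ with hn₀
  have hconst : ∀ p : PrimeSpectrum A, N p = n₀ := by
    have hclopen : IsClopen {p : PrimeSpectrum A | N p = n₀} := by
      constructor
      · have : {p : PrimeSpectrum A | N p = n₀}ᶜ =
            ⋃ (m : ℤ) (_ : m ≠ n₀), {p : PrimeSpectrum A | N p = m} := by
          ext p
          simp only [Set.mem_compl_iff, Set.mem_setOf_eq, Set.mem_iUnion]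
          exact ⟨fun h => ⟨N p, h, rfl⟩, fun ⟨m, hm, hpm⟩ => hpm ▸ hm⟩
        rw [← isOpen_compl_iff, this]
        exact isOpen_iUnion fun m => isOpen_iUnion fun _ => hopen m
      · exact hopen n₀
    obtain ⟨e, he, hse⟩ := PrimeSpectrum.isClopen_iff.mp hclopen
    rcases hA e he with rfl | rfl
    · exfalso
      have : p₀ ∈ {p : PrimeSpectrum A | N p = n₀} := rfl
      rw [hse] at this
      simp at this
    · intro p
      have : p ∈ (basicOpen (1 : A) : Set (PrimeSpectrum A)) := by
        rw [basicOpen_one]; trivial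
      rw [← hse] at this
      exact this
  refine ⟨n₀, ?_, ?_⟩
  · by_contra h
    obtain ⟨m, hm, hmem⟩ := exists_max_ideal_of_mem_nonunits h
    haveI := hm
    set p : PrimeSpectrum A := ⟨m, hm.isPrime⟩ with hp
    exact ((key p n₀).mp (hconst p)).1 hmem
  · intro i hi
    rw [nilpotent_iff_mem_prime]
    intro J hJ
    haveI := hJ
    set p : PrimeSpectrum A := ⟨J, hJ⟩ with hp
    have horder : (u.map (Ideal.Quotient.mk J)).order = n₀ := hconst p
    have : (u.map (Ideal.Quotient.mk J)).coeff i = 0 :=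
      HahnSeries.coeff_eq_zero_of_lt_order (by rw [horder]; exact_mod_cast hi)
    rw [HahnSeries.map_coeff] at this
    exact Ideal.Quotient.eq_zero_iff_mem.mp this
end

section
/- Let A be a commutative ring and a a Laurent series in A((t)). If there is an integer n such that the coefficient of t^n in a is a unit of A and the coefficient of t^i in a is nilpotent for every integer i < n, then a is a unit of the ring A((t)). -/
open HahnSeries

private lemma laurent_single_isUnit (A : Type*) [CommRing A] (n : ℤ) :
    IsUnit (HahnSeries.single n (1 : A) : LaurentSeries A) :=
  IsUnit.of_mul_eq_one (HahnSeries.single (-n) 1) (by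
    rw [HahnSeries.single_mul_single, add_neg_cancel, one_mul, HahnSeries.single_zero_one])

private lemma laurent_ofPS_coeff_neg {A : Type*} [CommRing A] (p : PowerSeries A)
    (j : ℤ) (hj : j < 0) : (HahnSeries.ofPowerSeries ℤ A p).coeff j = 0 := by
  rw [HahnSeries.ofPowerSeries_apply, HahnSeries.embDomain_notin_range]
  rintro ⟨k, rfl⟩
  simp at hj
  omega

/-- Converse direction of Lemma 4.3.4: if a Laurent series over a commutative ring
has a unit coefficient in some degree `n` with all lower coefficients nilpotent,
then it is a unit of `A((t))`. -/
theorem laurent_isUnit_of_order (A : Type*) [CommRing A]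
    (a : LaurentSeries A) (n : ℤ)
    (hn : IsUnit (a.coeff n)) (hn' : ∀ i : ℤ, i < n → IsNilpotent (a.coeff i)) :
    IsUnit a := by
  -- finite set of low nonzero coefficients
  have hSfin : (a.support ∩ Set.Iio n).Finite := by
    rcases (a.support ∩ Set.Iio n).eq_empty_or_nonempty with h | h
    · simp [h]
    · have hWF : (a.support ∩ Set.Iio n).IsWF :=
        a.isWF_support.mono Set.inter_subset_left
      refine (Set.finite_Icc (hWF.min h) (n - 1)).subset ?_
      intro x hx
      exact ⟨hWF.min_le h hx, by have := hx.2; simp only [Set.mem_Iio] at this; omega⟩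
  set N : LaurentSeries A := ∑ i ∈ hSfin.toFinset, HahnSeries.single i (a.coeff i) with hNdef
  have hNcoeff : ∀ i : ℤ, N.coeff i = if i < n then a.coeff i else 0 := by
    intro i
    rw [hNdef]
    rw [show (∑ j ∈ hSfin.toFinset, HahnSeries.single j (a.coeff j)).coeff i
        = ∑ j ∈ hSfin.toFinset, (HahnSeries.single j (a.coeff j)).coeff i from
      map_sum (HahnSeries.coeff.addMonoidHom i) _ _]
    by_cases hi : i ∈ hSfin.toFinset
    · rw [Finset.sum_eq_single i (fun j _ hji => HahnSeries.coeff_single_of_ne (Ne.symm hji))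
        (fun h => absurd hi h)]
      have := (Set.Finite.mem_toFinset hSfin).mp hi
      rw [HahnSeries.coeff_single_same, if_pos (Set.mem_Iio.mp this.2)]
    · rw [Finset.sum_eq_zero fun j hj => HahnSeries.coeff_single_of_ne
        (by rintro rfl; exact hi hj)]
      simp only [Set.Finite.mem_toFinset, Set.mem_inter_iff, HahnSeries.mem_support,
        Set.mem_Iio, not_and_or, not_not, not_lt] at hi
      rcases hi with h0 | h0
      · split <;> simp [h0]
      · rw [if_neg (by omega)]
  have hNnil : IsNilpotent N := by
    apply isNilpotent_sum
    intro i hi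
    have hilt : i < n := ((Set.Finite.mem_toFinset hSfin).mp hi).2
    obtain ⟨m, hm⟩ := hn' i hilt
    exact ⟨m, by rw [HahnSeries.single_pow, hm, HahnSeries.single_eq_zero]⟩
  set P : PowerSeries A := PowerSeries.mk fun k => a.coeff (n + k) with hPdef
  have hPunit : IsUnit (HahnSeries.ofPowerSeries ℤ A P) := by
    refine IsUnit.map _ (PowerSeries.isUnit_iff_constantCoeff.mpr ?_)
    simpa [hPdef] using hn
  have hb : IsUnit (HahnSeries.single n (1 : A) * HahnSeries.ofPowerSeries ℤ A P) :=
    (laurent_single_isUnit A n).mul hPunit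
  have key : a = HahnSeries.single n (1 : A) * HahnSeries.ofPowerSeries ℤ A P + N := by
    ext i
    rw [HahnSeries.coeff_add, hNcoeff i]
    have hmul : (HahnSeries.single n (1 : A) * HahnSeries.ofPowerSeries ℤ A P).coeff i
        = (HahnSeries.ofPowerSeries ℤ A P).coeff (i - n) := by
      rw [show i = (i - n) + n by ring, HahnSeries.coeff_single_mul_add, one_mul]
      ring_nf
    rw [hmul]
    by_cases hi : i < n
    · rw [laurent_ofPS_coeff_neg _ _ (by omega), if_pos hi, zero_add]
    · rw [if_neg hi, add_zero]
      have : i - n = ((i - n).toNat : ℤ) := by omega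
      rw [this, HahnSeries.ofPowerSeries_apply_coeff]
      simp only [hPdef, PowerSeries.coeff_mk]
      congr 1
      omega
  rw [key, add_comm]
  exact hNnil.isUnit_add_right_of_commute hb (Commute.all _ _)
end

section
/- Let A be a commutative ring, a and b Laurent series in A((t)), and n, m integers such that: the coefficient of t^n in a is a unit of A and the coefficient of t^i in a is nilpotent for all i < n; the coefficient of t^m in b is a unit of A and the coefficient of t^j in b is nilpotent for all j < m. Then the coefficient of t^{n+m} in the product a·b is a unit of A, and the coefficient of t^k in a·b is nilpotent for every k < n + m. (In particular, the order satisfies ord(ab) = ord(a) + ord(b).) -/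
/-- Lemma 4.3.4(b): the order is additive.  If `a` has unit coefficient in degree `n`
with nilpotent lower coefficients, and `b` likewise in degree `m`, then `a * b` has
unit coefficient in degree `n + m` and nilpotent coefficients below `n + m`. -/
theorem laurent_order_mul (A : Type*) [CommRing A]
    (a b : LaurentSeries A) (n m : ℤ)
    (hn  : IsUnit (a.coeff n)) (hn' : ∀ i : ℤ, i < n → IsNilpotent (a.coeff i))
    (hm  : IsUnit (b.coeff m)) (hm' : ∀ j : ℤ, j < m → IsNilpotent (b.coeff j)) :
    IsUnit ((a * b).coeff (n + m)) ∧
      ∀ k : ℤ, k < n + m → IsNilpotent ((a * b).coeff k) := by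
  have key : ∀ (ij : ℤ × ℤ), ij.1 + ij.2 < n + m →
      IsNilpotent (a.coeff ij.1 * b.coeff ij.2) := by
    intro ij h
    by_cases h1 : ij.1 < n
    · exact (Commute.all _ _).isNilpotent_mul_right (hn' _ h1)
    · exact (Commute.all _ _).isNilpotent_mul_left (hm' _ (by omega))
  constructor
  · rcases subsingleton_or_nontrivial A with hs | hs
    · exact isUnit_of_subsingleton _
    · have hmem : (n, m) ∈
          Finset.antidiagonal a.isPWO_support b.isPWO_support (n + m) := by
        rw [Finset.mem_addAntidiagonal]
        exact ⟨hn.ne_zero, hm.ne_zero, rfl⟩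
      rw [HahnSeries.coeff_mul, ← Finset.add_sum_erase _ _ hmem]
      refine IsNilpotent.isUnit_add_left_of_commute ?_ (hn.mul hm) (Commute.all _ _)
      apply isNilpotent_sum
      intro ij hij
      rw [Finset.mem_erase, Finset.mem_addAntidiagonal] at hij
      obtain ⟨hne, _, _, hsum⟩ := hij
      by_cases h1 : ij.1 < n
      · exact (Commute.all _ _).isNilpotent_mul_right (hn' _ h1)
      · have h2 : ij.2 < m ∨ ij = (n, m) := by
          rcases lt_or_ge ij.2 m with h | h
          · exact Or.inl h
          · right; have : ij.1 = n := by omega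
            have : ij.2 = m := by omega
            exact Prod.ext (by omega) this
        rcases h2 with h | h
        · exact (Commute.all _ _).isNilpotent_mul_left (hm' _ h)
        · exact absurd h hne
  · intro k hk
    rw [HahnSeries.coeff_mul]
    apply isNilpotent_sum
    intro ij hij
    rw [Finset.mem_addAntidiagonal] at hij
    exact key ij (hij.2.2 ▸ hk)
end

section
/- Let A be a commutative ring and a a unit of the Laurent series ring A((t)). Then there exist a natural number k, idempotents e_1, …, e_k of A with e_i·e_j = 0 for i ≠ j and e_1 + ⋯ + e_k = 1, and integers n_1, …, n_k, such that for each i: there exists b ∈ A with e_i · (coefficient of t^{n_i} in a) · b = e_i (i.e. e_i·a_{n_i} is invertible in the ring e_i·A), and e_i · (coefficient of t^j in a) is nilpotent for every integer j < n_i. -/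
open HahnSeries PrimeSpectrum

private lemma idem_nilpotent_eq_zero {A : Type*} [CommRing A] {e : A}
    (he : IsIdempotentElem e) (hn : IsNilpotent e) : e = 0 := by
  obtain ⟨n, hn⟩ := hn
  calc e = e ^ (n + 1) := (he.pow_succ_eq n).symm
    _ = e ^ n * e := pow_succ e n
    _ = 0 := by rw [hn, zero_mul]

private lemma laurent_aux {A : Type*} [CommRing A] [Nontrivial A]
    (a : (LaurentSeries A)ˣ) (p : Ideal A) (hp : p.IsPrime) :
    ∃ m : ℤ,
      m ∈ Finset.Icc (a : LaurentSeries A).order (-(↑a⁻¹ : LaurentSeries A).order) ∧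
      (a : LaurentSeries A).coeff m ∉ p ∧
      (↑a⁻¹ : LaurentSeries A).coeff (-m) ∉ p ∧
      (∀ j < m, (a : LaurentSeries A).coeff j ∈ p) ∧
      (∀ j < -m, (↑a⁻¹ : LaurentSeries A).coeff j ∈ p) := by
  haveI := hp
  set av : LaurentSeries A := (a : LaurentSeries A) with hav
  set bv : LaurentSeries A := (↑a⁻¹ : LaurentSeries A) with hbv
  set f := Ideal.Quotient.mk p with hf
  have hco : ∀ x : LaurentSeries A, x.map f.toNonUnitalRingHom = x.map f :=
    fun _ => rfl
  have hco1 : ((1 : LaurentSeries A).map f.toMonoidWithZeroHom : LaurentSeries (A ⧸ p))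
      = (1 : LaurentSeries A).map f := rfl
  have hone : (av.map f) * (bv.map f) = (1 : LaurentSeries (A ⧸ p)) := by
    rw [← hco, ← hco, ← HahnSeries.map_mul]
    have hab : av * bv = 1 := a.mul_inv
    rw [hab, hco, ← hco1]
    exact HahnSeries.map_one f.toMonoidWithZeroHom
  have ha0 : av.map f ≠ 0 := left_ne_zero_of_mul_eq_one hone
  have hb0 : bv.map f ≠ 0 := right_ne_zero_of_mul_eq_one hone
  have horder : (av.map f).order + (bv.map f).order = 0 := by
    rw [← order_mul ha0 hb0, hone, order_one]
  set m : ℤ := (av.map f).order with hm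
  have hma : (av.map f).coeff m ≠ 0 := coeff_order_eq_zero.not.mpr ha0
  have hmb : (bv.map f).coeff (-m) ≠ 0 := by
    have : -m = (bv.map f).order := by omega
    rw [this]
    exact coeff_order_eq_zero.not.mpr hb0
  have hcoeff : ∀ x : LaurentSeries A, ∀ g : ℤ, (x.map f).coeff g = f (x.coeff g) :=
    fun _ _ => rfl
  have hanp : av.coeff m ∉ p := fun h => hma (by
    rw [hcoeff, hf, Ideal.Quotient.eq_zero_iff_mem]; exact h)
  have hbnp : bv.coeff (-m) ∉ p := fun h => hmb (by
    rw [hcoeff, hf, Ideal.Quotient.eq_zero_iff_mem]; exact h)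
  refine ⟨m, ?_, hanp, hbnp, ?_, ?_⟩
  · rw [Finset.mem_Icc]
    constructor
    · apply order_le_of_coeff_ne_zero
      intro h
      exact hma (by rw [hcoeff, h, map_zero])
    · have h1 : bv.order ≤ -m := by
        apply order_le_of_coeff_ne_zero
        intro h
        exact hmb (by rw [hcoeff, h, map_zero])
      omega
  · intro j hj
    have h0 : (av.map f).coeff j = 0 := coeff_eq_zero_of_lt_order hj
    rw [hcoeff, hf, Ideal.Quotient.eq_zero_iff_mem] at h0
    exact h0
  · intro j hj
    have hj' : j < (bv.map f).order := by omega
    have h0 : (bv.map f).coeff j = 0 := coeff_eq_zero_of_lt_order hj'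
    rw [hcoeff, hf, Ideal.Quotient.eq_zero_iff_mem] at h0
    exact h0

/-- Lemma 4.3.4(c): for an arbitrary commutative ring `A` and a unit `a` of `A((t))`,
there is a finite system of orthogonal idempotents `e₁, …, e_k` summing to `1` and
integers `n₁, …, n_k` such that on each factor `eᵢ·A` the description of part (a)
applies: `eᵢ·a_{nᵢ}` is invertible in `eᵢ·A` and `eᵢ·a_j` is nilpotent for `j < nᵢ`. -/
theorem laurent_unit_order_decomposition (A : Type*) [CommRing A]
    (a : (LaurentSeries A)ˣ) :
    ∃ (k : ℕ) (e : Fin k → A) (n : Fin k → ℤ),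
      (∀ i, IsIdempotentElem (e i)) ∧
      (∀ i j, i ≠ j → e i * e j = 0) ∧
      (∑ i, e i) = 1 ∧
      ∀ i,
        (∃ b : A, e i * (a : LaurentSeries A).coeff (n i) * b = e i) ∧
        ∀ j : ℤ, j < n i → IsNilpotent (e i * (a : LaurentSeries A).coeff j) := by
  rcases subsingleton_or_nontrivial A with hA | hA
  · exact ⟨0, Fin.elim0, Fin.elim0, fun i => i.elim0, fun i => i.elim0,
      Subsingleton.elim _ _, fun i => i.elim0⟩
  set av : LaurentSeries A := (a : LaurentSeries A) with hav
  set bv : LaurentSeries A := (↑a⁻¹ : LaurentSeries A) with hbv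
  set s : Finset ℤ := Finset.Icc av.order (-bv.order) with hs
  set c : ℤ → A := fun m => av.coeff m * bv.coeff (-m) with hc
  choose ord hmem hcoa hcob hlta hltb using
    fun x : PrimeSpectrum A => laurent_aux a x.asIdeal x.isPrime
  have hx_in : ∀ x : PrimeSpectrum A, c (ord x) ∉ x.asIdeal := by
    intro x h
    rcases x.isPrime.mem_or_mem h with h | h
    exacts [hcoa x h, hcob x h]
  have huniq : ∀ (x : PrimeSpectrum A) (m : ℤ), c m ∉ x.asIdeal → m = ord x := by
    intro x m hm
    by_contra hne
    rcases lt_or_gt_of_ne hne with h | h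
    · exact hm (Ideal.mul_mem_right _ _ (hlta x m h))
    · exact hm (Ideal.mul_mem_left _ _ (hltb x (-m) (by omega)))
  -- each fiber of `ord` is clopen, hence cut out by an idempotent
  have hsets : ∀ m : ℤ,
      ({x : PrimeSpectrum A | c m ∉ x.asIdeal} : Set (PrimeSpectrum A))
        = ↑(basicOpen (c m)) := by
    intro m; ext x; simp [PrimeSpectrum.mem_basicOpen]
  have hE : ∀ m : ℤ, ∃ eA : A, IsIdempotentElem eA ∧
      ({x : PrimeSpectrum A | c m ∉ x.asIdeal} : Set (PrimeSpectrum A))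
        = ↑(basicOpen eA) := by
    intro m
    apply exists_idempotent_basicOpen_eq_of_isClopen
    constructor
    · -- closed: complement is a union of basic opens
      rw [← isOpen_compl_iff]
      have hcompl : ({x : PrimeSpectrum A | c m ∉ x.asIdeal} : Set (PrimeSpectrum A))ᶜ
          = ⋃ m' ∈ s.erase m, ({x : PrimeSpectrum A | c m' ∉ x.asIdeal} : Set _) := by
        ext x
        simp only [Set.mem_compl_iff, Set.mem_setOf_eq, not_not, Set.mem_iUnion,
          Finset.mem_erase, exists_prop]
        constructor
        · intro h
          refine ⟨ord x, ⟨?_, hmem x⟩, hx_in x⟩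
          intro heq
          exact (heq ▸ hx_in x) h
        · rintro ⟨m', ⟨hne, _⟩, hm'⟩
          by_contra h
          exact hne ((huniq x m' hm').trans (huniq x m h).symm)
      rw [hcompl]
      apply isOpen_biUnion
      intro m' _
      rw [hsets m']
      exact (basicOpen (c m')).isOpen
    · rw [hsets m]
      exact (basicOpen (c m)).isOpen
  choose E hEidem hEbasic using hE
  have hEmem : ∀ (m : ℤ) (x : PrimeSpectrum A), E m ∉ x.asIdeal ↔ c m ∉ x.asIdeal := by
    intro m x
    have := Set.ext_iff.mp (hEbasic m) x
    simpa [PrimeSpectrum.mem_basicOpen] using this.symm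
  -- orthogonality
  have hor : ∀ m m' : ℤ, m ≠ m' → E m * E m' = 0 := by
    intro m m' hne
    apply idem_nilpotent_eq_zero
      ((hEidem m).mul_of_commute (Commute.all _ _) (hEidem m'))
    rw [nilpotent_iff_mem_prime]
    intro J hJ
    set x : PrimeSpectrum A := ⟨J, hJ⟩
    by_cases h1 : E m ∈ J
    · exact Ideal.mul_mem_right _ _ h1
    · have h2 : E m' ∈ J := by
        by_contra h2
        exact hne (((huniq x m ((hEmem m x).mp h1))).trans
          (huniq x m' ((hEmem m' x).mp h2)).symm)
      exact Ideal.mul_mem_left _ _ h2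
  -- the idempotents sum to 1
  have hT : (∑ m ∈ s, E m) = 1 := by
    set T : A := ∑ m ∈ s, E m with hTdef
    have hTnot : ∀ x : PrimeSpectrum A, T ∉ x.asIdeal := by
      intro x hTx
      have hms : ord x ∈ s := hmem x
      have hrest : (∑ m ∈ s.erase (ord x), E m) ∈ x.asIdeal := by
        apply Ideal.sum_mem
        intro m hm'
        rcases Finset.mem_erase.mp hm' with ⟨hne, _⟩
        by_contra h
        exact hne (huniq x m ((hEmem m x).mp h))
      have hsplit : T = E (ord x) + ∑ m ∈ s.erase (ord x), E m :=
        (Finset.add_sum_erase s E hms).symm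
      have : E (ord x) ∈ x.asIdeal := by
        have := x.asIdeal.sub_mem hTx hrest
        rwa [hsplit, add_sub_cancel_right] at this
      exact ((hEmem (ord x) x).mpr (hx_in x)) this
    have hTidem : IsIdempotentElem T := by
      rw [IsIdempotentElem, hTdef, Finset.sum_mul_sum]
      apply Finset.sum_congr rfl
      intro m hm'
      rw [Finset.sum_eq_single m]
      · exact hEidem m
      · intro m' _ hne
        exact hor m m' (Ne.symm hne)
      · intro h; exact absurd hm' h
    have h0 : T * (1 - T) = 0 := by
      rw [mul_sub, mul_one, hTidem.eq, sub_self]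
    have hnil : IsNilpotent (1 - T) := by
      rw [nilpotent_iff_mem_prime]
      intro J hJ
      rcases hJ.mem_or_mem (h0 ▸ J.zero_mem) with h | h
      · exact absurd h (hTnot ⟨J, hJ⟩)
      · exact h
    have := idem_nilpotent_eq_zero hTidem.one_sub hnil
    exact (sub_eq_zero.mp this).symm
  -- package via an equivalence with `Fin s.card`
  refine ⟨s.card, fun i => E ((s.equivFin.symm i : ℤ)),
    fun i => ((s.equivFin.symm i : ℤ)), fun i => hEidem _, ?_, ?_, ?_⟩
  · intro i j hij
    apply hor
    exact fun h => hij (by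
      have := Subtype.coe_injective h
      exact s.equivFin.symm.injective this)
  · rw [← hT]
    rw [← Finset.sum_coe_sort s E]
    exact Fintype.sum_equiv s.equivFin.symm _ _ (fun i => rfl)
  · intro i
    set m : ℤ := (s.equivFin.symm i : ℤ) with hm
    constructor
    · -- invertibility of `E m * a_m` in `E m · A`
      set u : A := E m * av.coeff m + (1 - E m) with hu
      have hunit : IsUnit u := by
        by_contra h
        obtain ⟨J, hJmax, hJ⟩ := exists_max_ideal_of_mem_nonunits h
        haveI : J.IsPrime := hJmax.isPrime
        set x : PrimeSpectrum A := ⟨J, hJmax.isPrime⟩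
        by_cases hEm : E m ∈ J
        · have h1 : (1 : A) ∈ J := by
            have hin : u - E m * av.coeff m + E m ∈ J :=
              J.add_mem (J.sub_mem hJ (Ideal.mul_mem_right _ _ hEm)) hEm
            have : u - E m * av.coeff m + E m = 1 := by rw [hu]; ring
            rwa [this] at hin
          exact hJmax.ne_top ((Ideal.eq_top_iff_one J).mpr h1)
        · have hcm : c m ∉ J := (hEmem m x).mp hEm
          have hmx : m = ord x := huniq x m hcm
          have hax : av.coeff m ∉ J := by rw [hmx]; exact hcoa x
          have h1m : (1 : A) - E m ∈ J := by
            have h0 : E m * ((1 : A) - E m) = 0 := by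
              rw [mul_sub, mul_one, (hEidem m).eq, sub_self]
            rcases ‹J.IsPrime›.mem_or_mem (h0 ▸ J.zero_mem) with h' | h'
            · exact absurd h' hEm
            · exact h'
          have hmem' : E m * av.coeff m ∈ J := by
            have := J.sub_mem hJ h1m
            rwa [hu, add_sub_cancel_right] at this
          rcases ‹J.IsPrime›.mem_or_mem hmem' with h' | h'
          · exact hEm h'
          · exact hax h'
      obtain ⟨v, hv⟩ := hunit
      refine ⟨(↑v⁻¹ : A), ?_⟩
      show E m * av.coeff m * (↑v⁻¹ : A) = E m
      have h1 : E m * av.coeff m = E m * u := by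
        rw [hu]
        linear_combination (1 - av.coeff m) * (hEidem m).eq
      rw [h1, mul_assoc, ← hv, Units.mul_inv, mul_one]
    · intro j hj
      have hj' : j < m := hj
      rw [nilpotent_iff_mem_prime]
      intro J hJ
      set x : PrimeSpectrum A := ⟨J, hJ⟩
      by_cases hEm : E m ∈ J
      · exact Ideal.mul_mem_right _ _ hEm
      · have hmx : m = ord x := huniq x m ((hEmem m x).mp hEm)
        have : av.coeff j ∈ J := hlta x j (hmx ▸ hj')
        exact Ideal.mul_mem_left _ _ this
end

section
/- Let A be a commutative ring with no nontrivial idempotents and a a unit of the Laurent series ring A((t)). Then there exist an integer n, a unit a₀ of A, a formal power series f ∈ A[[t]] with constant coefficient 1, and a Laurent series g ∈ A((t)) whose coefficient in degree 0 equals 1, whose coefficient in every positive degree equals 0, and whose coefficient in every negative degree is nilpotent, such that a = t^n · a₀ · f · g in A((t)). -/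
open HahnSeries

namespace LUF

variable {A : Type*} [CommRing A]

lemma coeff_mul_mem (I J : Ideal A) {x y : LaurentSeries A}
    (hx : ∀ i, x.coeff i ∈ I) (hy : ∀ i, y.coeff i ∈ J) (k : ℤ) :
    (x * y).coeff k ∈ I * J := by
  rw [HahnSeries.coeff_mul]
  exact Ideal.sum_mem _ (fun ij _ => Ideal.mul_mem_mul (hx _) (hy _))

lemma coeff_mul_mem_left (I : Ideal A) {x y : LaurentSeries A}
    (hx : ∀ i, x.coeff i ∈ I) (k : ℤ) : (x * y).coeff k ∈ I := by
  have := coeff_mul_mem I ⊤ (y := y) hx (fun _ => Submodule.mem_top) k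
  rwa [Ideal.mul_top] at this

lemma coeff_mul_mem_right (I : Ideal A) {x y : LaurentSeries A}
    (hy : ∀ i, y.coeff i ∈ I) (k : ℤ) : (x * y).coeff k ∈ I := by
  rw [mul_comm]; exact coeff_mul_mem_left I hy k

lemma negsupp_mul {x y : LaurentSeries A} (hx : ∀ i : ℤ, 0 ≤ i → x.coeff i = 0)
    (hy : ∀ i : ℤ, 0 ≤ i → y.coeff i = 0) : ∀ i : ℤ, 0 ≤ i → (x * y).coeff i = 0 := by
  intro i hi
  by_contra h
  obtain ⟨u, hu, v, hv, huv⟩ := HahnSeries.support_mul_subset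
    ((HahnSeries.mem_support _ _).mpr h)
  rw [HahnSeries.mem_support] at hu hv
  have h1 : u < 0 := by by_contra h'; exact hu (hx u (by omega))
  have h2 : v < 0 := by by_contra h'; exact hv (hy v (by omega))
  simp only at huv
  omega

/-- A Laurent series with finite support whose coefficients are all nilpotent is nilpotent. -/
lemma isNilpotent_of_support_subset (s : Finset ℤ) :
    ∀ x : LaurentSeries A, x.support ⊆ ↑s → (∀ i, IsNilpotent (x.coeff i)) → IsNilpotent x := by
  classical
  induction s using Finset.induction_on with
  | empty =>
    intro x hs _
    have : x = 0 := by
      ext i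
      by_contra h
      exact absurd (hs ((HahnSeries.mem_support _ _).mpr h)) (by simp)
    rw [this]; exact IsNilpotent.zero
  | @insert j s hj ih =>
    intro x hs hnil
    set y : LaurentSeries A := x - HahnSeries.single j (x.coeff j) with hy
    have hyc : ∀ i, y.coeff i = if i = j then 0 else x.coeff i := by
      intro i
      rw [hy, HahnSeries.coeff_sub, HahnSeries.coeff_single]
      split <;> simp_all
    have hysupp : y.support ⊆ ↑s := by
      intro i hi
      rw [HahnSeries.mem_support, hyc] at hi
      split at hi
      · exact absurd rfl hi
      · next hne =>
        have := hs ((HahnSeries.mem_support _ _).mpr hi)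
        simp only [Finset.coe_insert, Set.mem_insert_iff] at this
        rcases this with h | h
        · exact absurd h hne
        · exact h
    have hynil : IsNilpotent y := by
      refine ih y hysupp (fun i => ?_)
      rw [hyc]; split
      · exact IsNilpotent.zero
      · exact hnil i
    have hsing : IsNilpotent (HahnSeries.single j (x.coeff j) : LaurentSeries A) := by
      obtain ⟨k, hk⟩ := hnil j
      exact ⟨k, by rw [HahnSeries.single_pow, hk, HahnSeries.single_eq_zero]⟩
    have : x = HahnSeries.single j (x.coeff j) + y := by rw [hy]; ring
    rw [this]
    exact (Commute.all _ _).isNilpotent_add hsing hynil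

lemma isNilpotent_of_neg_nilpotent {x : LaurentSeries A}
    (h1 : ∀ i : ℤ, 0 ≤ i → x.coeff i = 0) (h2 : ∀ i, IsNilpotent (x.coeff i)) :
    IsNilpotent x := by
  by_cases hx : x = 0
  · rw [hx]; exact IsNilpotent.zero
  · refine isNilpotent_of_support_subset (Finset.Icc x.order (-1)) x ?_ h2
    intro i hi
    rw [HahnSeries.mem_support] at hi
    simp only [Finset.coe_Icc, Set.mem_Icc]
    constructor
    · by_contra h'
      exact hi (HahnSeries.coeff_eq_zero_of_lt_order (by omega))
    · by_contra h'
      exact hi (h1 i (by omega))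

lemma sum_coeff {β : Type*} (s : Finset β) (f : β → LaurentSeries A) (i : ℤ) :
    (∑ k ∈ s, f k).coeff i = ∑ k ∈ s, (f k).coeff i := by
  classical
  induction s using Finset.induction_on with
  | empty => simp
  | insert _ _ h ih => rw [Finset.sum_insert h, Finset.sum_insert h, HahnSeries.coeff_add, ih]

/-- Inverse of `1 + ν` for `ν` with negative support and coefficients in an ideal of
nilpotents, having the same shape. -/
lemma exists_inverse (I : Ideal A) (hI : I ≤ nilradical A) {ν : LaurentSeries A}
    (hsupp : ∀ i : ℤ, 0 ≤ i → ν.coeff i = 0) (hmem : ∀ i, ν.coeff i ∈ I) :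
    ∃ μ : LaurentSeries A, (∀ i : ℤ, 0 ≤ i → μ.coeff i = 0) ∧ (∀ i, μ.coeff i ∈ I) ∧
      (1 + ν) * (1 + μ) = 1 := by
  have hnilν : IsNilpotent ν :=
    isNilpotent_of_neg_nilpotent hsupp (fun i => mem_nilradical.mp (hI (hmem i)))
  obtain ⟨K, hK⟩ := hnilν
  have hK' : ν ^ (K + 1) = 0 := by rw [pow_succ, hK, zero_mul]
  have hμ' : (∑ k ∈ Finset.range (K + 1), (-ν) ^ k) - 1
      = ∑ k ∈ Finset.range K, (-ν) ^ (k + 1) := by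
    rw [geom_sum_succ, add_sub_cancel_right, Finset.mul_sum]
    exact Finset.sum_congr rfl (fun k _ => (pow_succ' _ _).symm)
  have hpow : ∀ k : ℕ, (∀ i : ℤ, 0 ≤ i → ((-ν) ^ (k + 1)).coeff i = 0) ∧
      (∀ i : ℤ, ((-ν) ^ (k + 1)).coeff i ∈ I) := by
    intro k
    induction k with
    | zero =>
      refine ⟨fun i hi => ?_, fun i => ?_⟩ <;>
        simp only [zero_add, pow_one, HahnSeries.coeff_neg]
      · rw [hsupp i hi, neg_zero]
      · exact neg_mem (hmem i)
    | succ k ih =>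
      have hrw : (-ν) ^ (k + 1 + 1) = (-ν) ^ (k + 1) * (-ν) := by rw [pow_succ]
      constructor
      · intro i hi
        rw [hrw]
        refine negsupp_mul ih.1 (fun i hi => ?_) i hi
        rw [HahnSeries.coeff_neg, hsupp i hi, neg_zero]
      · intro i
        rw [hrw]
        exact coeff_mul_mem_left I ih.2 i
  refine ⟨(∑ k ∈ Finset.range (K + 1), (-ν) ^ k) - 1, ?_, ?_, ?_⟩
  · intro i hi
    rw [hμ', sum_coeff]
    exact Finset.sum_eq_zero (fun k _ => (hpow k).1 i hi)
  · intro i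
    rw [hμ', sum_coeff]
    exact Ideal.sum_mem _ (fun k _ => (hpow k).2 i)
  · have hgeom := geom_sum_mul (-ν) (K + 1)
    have hz : (-ν) ^ (K + 1) = 0 := by
      rw [show (-ν) = -1 * ν by ring, mul_pow, hK', mul_zero]
    rw [hz, zero_sub] at hgeom
    linear_combination -hgeom

variable {A : Type*} [CommRing A]

/-- Truncation to nonnegative degrees. -/
noncomputable def posPart (x : LaurentSeries A) : PowerSeries A :=
  PowerSeries.mk fun n => x.coeff (n : ℤ)

lemma ofPowerSeries_coeff_neg (f : PowerSeries A) {i : ℤ} (hi : i < 0) :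
    (HahnSeries.ofPowerSeries ℤ A f).coeff i = 0 := by
  rw [HahnSeries.ofPowerSeries_apply]
  apply HahnSeries.embDomain_notin_image_support
  rintro ⟨n, -, hn⟩
  have : ((n : ℤ)) = i := hn
  omega

lemma ofPowerSeries_coeff_nonneg (f : PowerSeries A) {i : ℤ} (hi : 0 ≤ i) :
    (HahnSeries.ofPowerSeries ℤ A f).coeff i = PowerSeries.coeff i.toNat f := by
  obtain ⟨n, rfl⟩ := Int.eq_ofNat_of_zero_le hi
  rw [HahnSeries.ofPowerSeries_apply_coeff]
  simp

lemma posPart_coeff (x : LaurentSeries A) (n : ℕ) :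
    PowerSeries.coeff n (posPart x) = x.coeff (n : ℤ) := by
  rw [posPart, PowerSeries.coeff_mk]

lemma ofPosPart_coeff (x : LaurentSeries A) (i : ℤ) :
    (HahnSeries.ofPowerSeries ℤ A (posPart x)).coeff i
      = if 0 ≤ i then x.coeff i else 0 := by
  split
  · next hi =>
    rw [ofPowerSeries_coeff_nonneg _ hi, posPart_coeff]
    congr 1
    omega
  · next hi => exact ofPowerSeries_coeff_neg _ (by omega)

lemma constantCoeff_posPart (x : LaurentSeries A) :
    PowerSeries.constantCoeff (posPart x) = x.coeff 0 := by
  rw [← PowerSeries.coeff_zero_eq_constantCoeff]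
  exact_mod_cast posPart_coeff x 0

/-- Key Birkhoff-type factorization for series `u` with `u - 1` having coefficients in a
nilpotent ideal. -/
lemma factor_small : ∀ d : ℕ, ∀ J : Ideal A, J ≤ nilradical A → J ^ d = ⊥ →
    ∀ u : LaurentSeries A, (∀ i, (u - 1).coeff i ∈ J) →
    ∃ (f : PowerSeries A) (g : LaurentSeries A),
      IsUnit (PowerSeries.constantCoeff f) ∧
      (∀ i : ℤ, 0 ≤ i → (g - 1).coeff i = 0) ∧
      (∀ i : ℤ, (g - 1).coeff i ∈ nilradical A) ∧
      u = HahnSeries.ofPowerSeries ℤ A f * g := by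
  intro d
  induction d with
  | zero =>
    intro J _ hJ u _
    rw [pow_zero, Ideal.one_eq_top] at hJ
    have h01 : (1 : A) = 0 := by
      have : (1 : A) ∈ (⊥ : Ideal A) := hJ ▸ Submodule.mem_top
      simpa using this
    haveI : Subsingleton A := subsingleton_of_zero_eq_one h01.symm
    refine ⟨1, 1, isUnit_one.map _, ?_, ?_, ?_⟩
    · intro i _; exact Subsingleton.elim _ _
    · intro i; rw [Subsingleton.elim ((1 - 1 : LaurentSeries A).coeff i) 0]; exact zero_mem _
    · exact HahnSeries.ext (Subsingleton.elim _ _)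
  | succ d ih =>
    intro J hJle hJ u hu
    rcases Nat.eq_zero_or_pos d with rfl | hd
    · -- J = ⊥, so u = 1
      rw [pow_one] at hJ
      have hu1 : u = 1 := by
        have : u - 1 = 0 := HahnSeries.ext (funext fun i => by
          have := hu i; rw [hJ] at this; simpa using this)
        linear_combination this
      refine ⟨1, 1, isUnit_one.map _, ?_, ?_, ?_⟩
      · intro i _; simp
      · intro i; simp [zero_mem]
      · simp [hu1]
    · -- main step
      obtain ⟨f₁, hf₁⟩ : ∃ f, f = posPart u := ⟨_, rfl⟩
      obtain ⟨F₁, hF₁⟩ : ∃ F, F = HahnSeries.ofPowerSeries ℤ A f₁ := ⟨_, rfl⟩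
      have hc₁ : PowerSeries.constantCoeff f₁ = 1 + (u - 1).coeff 0 := by
        rw [hf₁, constantCoeff_posPart, HahnSeries.coeff_sub, HahnSeries.coeff_one]
        simp
      have hc₁u : IsUnit (PowerSeries.constantCoeff f₁) := by
        rw [hc₁]
        exact IsNilpotent.isUnit_one_add (mem_nilradical.mp (hJle (hu 0)))
      have hF₁u : IsUnit F₁ := by
        rw [hF₁]; exact (PowerSeries.isUnit_iff_constantCoeff.mpr hc₁u).map _
      obtain ⟨vF, hvF⟩ := hF₁u
      obtain ⟨E, hE⟩ : ∃ E : LaurentSeries A, E = ↑vF⁻¹ := ⟨_, rfl⟩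
      have hEF : E * F₁ = 1 := by rw [hE, ← hvF]; exact Units.inv_mul vF
      obtain ⟨ν, hν⟩ : ∃ ν : LaurentSeries A, ν = u - F₁ := ⟨_, rfl⟩
      have hνsupp : ∀ i : ℤ, 0 ≤ i → ν.coeff i = 0 := by
        intro i hi
        rw [hν, HahnSeries.coeff_sub, hF₁, hf₁, ofPosPart_coeff, if_pos hi, sub_self]
      have hνmem : ∀ i, ν.coeff i ∈ J := by
        intro i
        rcases le_or_gt 0 i with hi | hi
        · rw [hνsupp i hi]; exact zero_mem J
        · rw [hν, HahnSeries.coeff_sub, hF₁, hf₁, ofPosPart_coeff, if_neg (by omega), sub_zero]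
          have := hu i
          rwa [HahnSeries.coeff_sub, HahnSeries.coeff_one, if_neg (by omega), sub_zero] at this
      obtain ⟨μ, hμsupp, hμmem, hinv⟩ := exists_inverse J hJle hνsupp hνmem
      have hF₁1 : ∀ i, (F₁ - 1).coeff i ∈ J := by
        intro i
        rw [HahnSeries.coeff_sub, hF₁, hf₁, ofPosPart_coeff]
        rcases le_or_gt 0 i with hi | hi
        · rw [if_pos hi]
          have := hu i
          rwa [HahnSeries.coeff_sub] at this
        · rw [if_neg (by omega), HahnSeries.coeff_one, if_neg (by omega), sub_zero]
          exact zero_mem J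
      obtain ⟨u', hu'⟩ : ∃ w : LaurentSeries A, w = E * (1 + μ) * u := ⟨_, rfl⟩
      have hid : u' - 1 = E * (μ * (F₁ - 1)) := by
        linear_combination hu' + hEF + E * hinv - (E * (1 + μ)) * hν
      have hu'mem : ∀ i, (u' - 1).coeff i ∈ J ^ 2 := by
        intro i
        rw [hid, sq]
        exact coeff_mul_mem_right _ (fun k => coeff_mul_mem J J hμmem hF₁1 k) i
      have hJ2le : J ^ 2 ≤ nilradical A := le_trans (Ideal.pow_le_self two_ne_zero) hJle
      have hJ2pow : (J ^ 2) ^ d = ⊥ := by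
        rw [← pow_mul]
        refine le_bot_iff.mp ?_
        rw [← hJ]
        exact Ideal.pow_le_pow_right (by omega)
      obtain ⟨f', g', hf'u, hg'supp, hg'mem, hfac⟩ := ih (J ^ 2) hJ2le hJ2pow u' hu'mem
      refine ⟨f₁ * f', (1 + ν) * g', ?_, ?_, ?_, ?_⟩
      · rw [map_mul]; exact hc₁u.mul hf'u
      · intro i hi
        have hrw : (1 + ν) * g' - 1 = (g' - 1) + (ν + ν * (g' - 1)) := by ring
        rw [hrw, HahnSeries.coeff_add, hg'supp i hi, HahnSeries.coeff_add, hνsupp i hi,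
          negsupp_mul hνsupp (fun j hj => hg'supp j hj) i hi]
        ring
      · intro i
        have hrw : (1 + ν) * g' - 1 = (g' - 1) + ν * g' := by ring
        rw [hrw, HahnSeries.coeff_add]
        refine add_mem (hg'mem i) ?_
        exact coeff_mul_mem_left _ (fun k => hJle (hνmem k)) i
      · have hmain : u = F₁ * (1 + ν) * u' := by
          linear_combination (-(F₁ * (1 + ν))) * hu' - u * hEF - u * F₁ * E * hinv
        rw [hmain, hfac, map_mul, hF₁]
        ring

lemma span_finset_isNilpotent (s : Finset A) (h : ∀ x ∈ s, IsNilpotent x) :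
    IsNilpotent (Ideal.span (s : Set A)) := by
  classical
  induction s using Finset.induction_on with
  | empty =>
    rw [Finset.coe_empty, Ideal.span_empty]
    exact ⟨1, by simp⟩
  | @insert a s ha ih =>
    rw [Finset.coe_insert, Ideal.span_insert]
    have h1 : IsNilpotent (Ideal.span {a}) := by
      obtain ⟨k, hk⟩ := h a (Finset.mem_insert_self a s)
      exact ⟨k, by rw [Ideal.span_singleton_pow, hk, Ideal.span_singleton_eq_bot.mpr rfl]; rfl⟩
    have h2 : IsNilpotent (Ideal.span (s : Set A)) :=
      ih (fun x hx => h x (Finset.mem_insert_of_mem hx))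
    have := (Commute.all (Ideal.span {a}) (Ideal.span (s : Set A))).isNilpotent_add h1 h2
    rwa [Submodule.add_eq_sup] at this

/-- Main factorization: a Laurent series with constant coefficient `1` and nilpotent
negative coefficients factors as a power series (with unit constant coefficient)
times a series of the shape `1 + (negative nilpotent part)`. -/
lemma factor_main [Nontrivial A] (h : LaurentSeries A) (h0 : h.coeff 0 = 1)
    (hneg : ∀ i : ℤ, i < 0 → IsNilpotent (h.coeff i)) :
    ∃ (f : PowerSeries A) (g : LaurentSeries A),
      IsUnit (PowerSeries.constantCoeff f) ∧
      (∀ i : ℤ, 0 ≤ i → (g - 1).coeff i = 0) ∧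
      (∀ i : ℤ, (g - 1).coeff i ∈ nilradical A) ∧
      h = HahnSeries.ofPowerSeries ℤ A f * g := by
  classical
  have hne : h ≠ 0 := by
    intro hh
    rw [hh, HahnSeries.coeff_zero] at h0
    exact zero_ne_one h0
  obtain ⟨J, hJ⟩ : ∃ J : Ideal A,
      J = Ideal.span (((Finset.Icc h.order (-1 : ℤ)).image h.coeff : Finset A) : Set A) :=
    ⟨_, rfl⟩
  have hJle : J ≤ nilradical A := by
    rw [hJ, Ideal.span_le]
    intro x hx
    simp only [Finset.coe_image, Set.mem_image, Finset.mem_coe, Finset.mem_Icc] at hx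
    obtain ⟨i, ⟨-, hi2⟩, rfl⟩ := hx
    exact mem_nilradical.mpr (hneg i (by omega))
  have hJnil : IsNilpotent J := by
    rw [hJ]
    refine span_finset_isNilpotent _ (fun x hx => ?_)
    simp only [Finset.mem_image, Finset.mem_Icc] at hx
    obtain ⟨i, ⟨-, hi2⟩, rfl⟩ := hx
    exact hneg i (by omega)
  obtain ⟨d, hd⟩ := hJnil
  have hJcoeff : ∀ i : ℤ, i < 0 → h.coeff i ∈ J := by
    intro i hi
    rcases lt_or_ge i h.order with hlt | hge
    · rw [HahnSeries.coeff_eq_zero_of_lt_order hlt]; exact zero_mem J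
    · rw [hJ]
      apply Ideal.subset_span
      simp only [Finset.coe_image, Set.mem_image, Finset.mem_coe, Finset.mem_Icc]
      exact ⟨i, ⟨hge, by omega⟩, rfl⟩
  -- first step: peel off the nonnegative part
  obtain ⟨f₀, hf₀⟩ : ∃ f, f = posPart h := ⟨_, rfl⟩
  obtain ⟨F₀, hF₀⟩ : ∃ F, F = HahnSeries.ofPowerSeries ℤ A f₀ := ⟨_, rfl⟩
  have hc₀ : PowerSeries.constantCoeff f₀ = 1 := by rw [hf₀, constantCoeff_posPart, h0]
  have hF₀u : IsUnit F₀ := by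
    rw [hF₀]
    exact (PowerSeries.isUnit_iff_constantCoeff.mpr (hc₀ ▸ isUnit_one)).map _
  obtain ⟨vF, hvF⟩ := hF₀u
  obtain ⟨E, hE⟩ : ∃ E : LaurentSeries A, E = ↑vF⁻¹ := ⟨_, rfl⟩
  have hEF : E * F₀ = 1 := by rw [hE, ← hvF]; exact Units.inv_mul vF
  obtain ⟨u, hu⟩ : ∃ u : LaurentSeries A, u = E * h := ⟨_, rfl⟩
  have humem : ∀ i, (u - 1).coeff i ∈ J := by
    intro i
    have hrw : u - 1 = E * (h - F₀) := by linear_combination hu + hEF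
    rw [hrw]
    refine coeff_mul_mem_right _ (fun k => ?_) i
    rw [HahnSeries.coeff_sub, hF₀, hf₀, ofPosPart_coeff]
    rcases le_or_gt 0 k with hk | hk
    · rw [if_pos hk, sub_self]; exact zero_mem J
    · rw [if_neg (by omega), sub_zero]; exact hJcoeff k hk
  have hd' : J ^ d = ⊥ := hd
  obtain ⟨f', g', hf'u, hg'supp, hg'mem, hfac⟩ := factor_small d J hJle hd' u humem
  refine ⟨f₀ * f', g', ?_, hg'supp, hg'mem, ?_⟩
  · rw [map_mul, hc₀, one_mul]; exact hf'u
  · have hmain : h = F₀ * u := by linear_combination (-F₀) * hu - h * hEF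
    rw [hmain, hfac, map_mul, hF₀]
    ring

lemma exists_least_coeff_not_mem {x y : LaurentSeries A} (hxy : x * y = 1)
    (p : Ideal A) [hp : p.IsPrime] :
    ∃ i0 : ℤ, x.coeff i0 ∉ p ∧ ∀ i : ℤ, i < i0 → x.coeff i ∈ p := by
  have hinh : ∃ i : ℤ, x.coeff i ∉ p := by
    by_contra hall
    push_neg at hall
    have : (x * y).coeff 0 ∈ p := coeff_mul_mem_left p hall 0
    rw [hxy, HahnSeries.coeff_one, if_pos rfl] at this
    exact (Ideal.ne_top_iff_one p).mp hp.ne_top this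
  have hbdd : ∃ b : ℤ, ∀ z : ℤ, x.coeff z ∉ p → b ≤ z := by
    refine ⟨x.order, fun z hz => ?_⟩
    by_contra h
    apply hz
    rw [HahnSeries.coeff_eq_zero_of_lt_order (by omega : z < x.order)]
    exact zero_mem p
  obtain ⟨i0, hi0, hmin⟩ := Int.exists_least_of_bdd hbdd hinh
  refine ⟨i0, hi0, fun i hi => ?_⟩
  by_contra h
  exact absurd (hmin i h) (by omega)

lemma least_add_least_eq_zero {x y : LaurentSeries A} (hxy : x * y = 1)
    (p : Ideal A) [hp : p.IsPrime] {i0 j0 : ℤ}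
    (hx0 : x.coeff i0 ∉ p) (hxmin : ∀ i : ℤ, i < i0 → x.coeff i ∈ p)
    (hy0 : y.coeff j0 ∉ p) (hymin : ∀ j : ℤ, j < j0 → y.coeff j ∈ p) :
    i0 + j0 = 0 := by
  classical
  by_contra hne
  have hzero : (x * y).coeff (i0 + j0) = 0 := by
    rw [hxy, HahnSeries.coeff_one, if_neg hne]
  have hmem : (i0, j0) ∈ Finset.antidiagonal x.isPWO_support y.isPWO_support (i0 + j0) := by
    rw [Finset.mem_antidiagonal]
    exact ⟨(HahnSeries.mem_support _ _).mpr (fun h => hx0 (h ▸ zero_mem p)),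
      (HahnSeries.mem_support _ _).mpr (fun h => hy0 (h ▸ zero_mem p)), rfl⟩
  have hrest : ∑ ij ∈ (Finset.antidiagonal x.isPWO_support y.isPWO_support
      (i0 + j0)).erase (i0, j0), x.coeff ij.1 * y.coeff ij.2 ∈ p := by
    refine Ideal.sum_mem _ (fun ij hij => ?_)
    obtain ⟨hne', hij'⟩ := Finset.mem_erase.mp hij
    rw [Finset.mem_antidiagonal] at hij'
    obtain ⟨-, -, hsum⟩ := hij'
    rcases lt_trichotomy ij.1 i0 with h1 | h1 | h1
    · exact Ideal.mul_mem_right _ p (hxmin _ h1)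
    · exact absurd (Prod.ext h1 (by omega)) hne'
    · exact Ideal.mul_mem_left _ _ (hymin _ (by omega))
  have hsum := Finset.add_sum_erase _
    (fun ij : ℤ × ℤ => x.coeff ij.1 * y.coeff ij.2) hmem
  rw [← HahnSeries.coeff_mul, hzero] at hsum
  have : x.coeff i0 * y.coeff j0 ∈ p := by
    have : x.coeff i0 * y.coeff j0 = 0 - (∑ ij ∈ (Finset.antidiagonal x.isPWO_support
        y.isPWO_support (i0 + j0)).erase (i0, j0), x.coeff ij.1 * y.coeff ij.2) := by
      linear_combination hsum
    rw [this]
    exact sub_mem (zero_mem p) hrest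
  rcases hp.mem_or_mem this with h | h
  · exact hx0 h
  · exact hy0 h

end LUF

/-- The factorization underlying Corollary 4.3.5: over a commutative ring with no
nontrivial idempotents, every unit `a` of `A((t))` factors as
`a = t^n · a₀ · f · g` where `a₀ ∈ Aˣ`, `f ∈ A[[t]]` has constant coefficient `1`,
and `g` has coefficient `1` in degree `0`, vanishing coefficients in positive degrees
and nilpotent coefficients in negative degrees. -/
theorem laurent_unit_factorization (A : Type*) [CommRing A]
    (hA : ∀ e : A, IsIdempotentElem e → e = 0 ∨ e = 1)
    (a : (LaurentSeries A)ˣ) :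
    ∃ (n : ℤ) (a₀ : Aˣ) (f : PowerSeries A) (g : LaurentSeries A),
      PowerSeries.constantCoeff f = 1 ∧
      g.coeff 0 = 1 ∧
      (∀ i : ℤ, 0 < i → g.coeff i = 0) ∧
      (∀ i : ℤ, i < 0 → IsNilpotent (g.coeff i)) ∧
      (a : LaurentSeries A) =
        HahnSeries.single n (1 : A) * HahnSeries.C (a₀ : A) *
          HahnSeries.ofPowerSeries ℤ A f * g := by
  classical
  rcases subsingleton_or_nontrivial A with hsub | hnt
  · haveI : Subsingleton (LaurentSeries A) :=
      ⟨fun x y => HahnSeries.ext (Subsingleton.elim _ _)⟩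
    exact ⟨0, 1, 1, 1, Subsingleton.elim _ _, Subsingleton.elim _ _,
      fun i _ => Subsingleton.elim _ _, fun i _ => ⟨1, Subsingleton.elim _ _⟩,
      Subsingleton.elim _ _⟩
  · obtain ⟨x, hxdef⟩ : ∃ x : LaurentSeries A, x = (↑a : LaurentSeries A) := ⟨_, rfl⟩
    obtain ⟨y, hydef⟩ : ∃ y : LaurentSeries A, y = (↑a⁻¹ : LaurentSeries A) := ⟨_, rfl⟩
    have hxy : x * y = 1 := by rw [hxdef, hydef, ← Units.val_mul, mul_inv_cancel, Units.val_one]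
    have hyx : y * x = 1 := by rw [mul_comm]; exact hxy
    -- clopen dichotomy from the idempotent hypothesis
    have hdichot : ∀ s : Set (PrimeSpectrum A), IsClopen s → s = ∅ ∨ s = Set.univ := by
      intro s hs
      obtain ⟨e, he, rfl⟩ := PrimeSpectrum.isClopen_iff.mp hs
      rcases hA e he with rfl | rfl
      · left; rw [PrimeSpectrum.basicOpen_zero]; rfl
      · right; rw [PrimeSpectrum.basicOpen_one]; rfl
    -- the sets T m
    have hTopen : ∀ (z : LaurentSeries A) (m : ℤ),
        IsOpen {p : PrimeSpectrum A | ∃ i : ℤ, i ≤ m ∧ z.coeff i ∉ p.asIdeal} := by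
      intro z m
      have : {p : PrimeSpectrum A | ∃ i : ℤ, i ≤ m ∧ z.coeff i ∉ p.asIdeal}
          = ⋃ i : {i : ℤ // i ≤ m}, ↑(PrimeSpectrum.basicOpen (z.coeff ↑i)) := by
        ext p
        constructor
        · rintro ⟨i, hi, hp⟩
          exact Set.mem_iUnion.mpr ⟨⟨i, hi⟩, hp⟩
        · intro hp
          obtain ⟨⟨i, hi⟩, hmem⟩ := Set.mem_iUnion.mp hp
          exact ⟨i, hi, hmem⟩
      rw [this]
      exact isOpen_iUnion fun i => (PrimeSpectrum.basicOpen _).2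
    have hTclopen : ∀ m : ℤ,
        IsClopen {p : PrimeSpectrum A | ∃ i : ℤ, i ≤ m ∧ x.coeff i ∉ p.asIdeal} := by
      intro m
      refine ⟨?_, hTopen x m⟩
      rw [← isOpen_compl_iff]
      have hcompl : {p : PrimeSpectrum A | ∃ i : ℤ, i ≤ m ∧ x.coeff i ∉ p.asIdeal}ᶜ
          = {p : PrimeSpectrum A | ∃ j : ℤ, j ≤ -m - 1 ∧ y.coeff j ∉ p.asIdeal} := by
        ext p
        haveI := p.isPrime
        simp only [Set.mem_compl_iff, Set.mem_setOf_eq]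
        constructor
        · intro h
          obtain ⟨i0, hx0, hxmin⟩ := LUF.exists_least_coeff_not_mem hxy p.asIdeal
          obtain ⟨j0, hy0, hymin⟩ := LUF.exists_least_coeff_not_mem hyx p.asIdeal
          have hsum := LUF.least_add_least_eq_zero hxy p.asIdeal hx0 hxmin hy0 hymin
          refine ⟨j0, ?_, hy0⟩
          have : ¬ (i0 ≤ m) := fun hle => h ⟨i0, hle, hx0⟩
          omega
        · rintro ⟨j, hj, hjp⟩ ⟨i, hi, hip⟩
          obtain ⟨i0, hx0, hxmin⟩ := LUF.exists_least_coeff_not_mem hxy p.asIdeal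
          obtain ⟨j0, hy0, hymin⟩ := LUF.exists_least_coeff_not_mem hyx p.asIdeal
          have hsum := LUF.least_add_least_eq_zero hxy p.asIdeal hx0 hxmin hy0 hymin
          have h1 : i0 ≤ i := by by_contra h'; exact hip (hxmin i (by omega))
          have h2 : j0 ≤ j := by by_contra h'; exact hjp (hymin j (by omega))
          omega
      rw [hcompl]
      exact hTopen y (-m - 1)
    -- find the least m with T m = univ
    have hPinh : ∃ m : ℤ, {p : PrimeSpectrum A | ∃ i : ℤ, i ≤ m ∧ x.coeff i ∉ p.asIdeal}
        = Set.univ := by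
      refine ⟨-y.order, Set.eq_univ_iff_forall.mpr fun p => ?_⟩
      haveI := p.isPrime
      obtain ⟨i0, hx0, hxmin⟩ := LUF.exists_least_coeff_not_mem hxy p.asIdeal
      obtain ⟨j0, hy0, hymin⟩ := LUF.exists_least_coeff_not_mem hyx p.asIdeal
      have hsum := LUF.least_add_least_eq_zero hxy p.asIdeal hx0 hxmin hy0 hymin
      have hyord : y.order ≤ j0 :=
        HahnSeries.order_le_of_coeff_ne_zero (fun h => hy0 (h ▸ zero_mem _))
      exact ⟨i0, by omega, hx0⟩
    have hPbdd : ∃ b : ℤ, ∀ m : ℤ,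
        {p : PrimeSpectrum A | ∃ i : ℤ, i ≤ m ∧ x.coeff i ∉ p.asIdeal} = Set.univ →
        b ≤ m := by
      refine ⟨x.order, fun m hm => ?_⟩
      obtain ⟨p⟩ : Nonempty (PrimeSpectrum A) := inferInstance
      have : p ∈ {p : PrimeSpectrum A | ∃ i : ℤ, i ≤ m ∧ x.coeff i ∉ p.asIdeal} := by
        rw [hm]; trivial
      obtain ⟨i, hi, hip⟩ := this
      have : x.order ≤ i :=
        HahnSeries.order_le_of_coeff_ne_zero (fun h => hip (h ▸ zero_mem _))
      omega
    obtain ⟨n, hPn, hPmin⟩ := Int.exists_least_of_bdd hPbdd hPinh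
    have hlow : {p : PrimeSpectrum A | ∃ i : ℤ, i ≤ n - 1 ∧ x.coeff i ∉ p.asIdeal} = ∅ := by
      rcases hdichot _ (hTclopen (n - 1)) with h | h
      · exact h
      · exact absurd (hPmin (n - 1) h) (by omega)
    -- coefficients below n are nilpotent
    have hnilp : ∀ i : ℤ, i < n → x.coeff i ∈ nilradical A := by
      intro i hi
      rw [nilradical_eq_sInf]
      refine Submodule.mem_sInf.mpr fun (J : Ideal A) (hJ : J.IsPrime) => ?_
      haveI : J.IsPrime := hJ
      by_contra h
      exact Set.eq_empty_iff_forall_notMem.mp hlow ⟨J, hJ⟩ ⟨i, by omega, h⟩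
    -- the coefficient at n is a unit
    have hxnu : IsUnit (x.coeff n) := by
      by_contra hnu
      obtain ⟨M, hM, hle⟩ := Ideal.exists_le_maximal (Ideal.span {x.coeff n})
        (fun h => hnu (Ideal.span_singleton_eq_top.mp h))
      haveI := hM.isPrime
      have hmem : (⟨M, hM.isPrime⟩ : PrimeSpectrum A)
          ∈ {p : PrimeSpectrum A | ∃ i : ℤ, i ≤ n ∧ x.coeff i ∉ p.asIdeal} := by
        rw [hPn]; trivial
      obtain ⟨i, hi, hip⟩ := hmem
      rcases lt_or_eq_of_le hi with hlt | rfl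
      · exact hip (nilradical_le_prime M (hnilp i hlt))
      · exact hip (hle (Ideal.mem_span_singleton_self _))
    obtain ⟨v, hv⟩ := hxnu
    -- normalize
    obtain ⟨h, hhdef⟩ : ∃ h : LaurentSeries A,
        h = HahnSeries.single (-n) (1 : A) * (HahnSeries.C (↑v⁻¹ : A) * x) := ⟨_, rfl⟩
    have hhcoeff : ∀ i : ℤ, h.coeff i = (↑v⁻¹ : A) * x.coeff (i + n) := by
      intro i
      rw [hhdef]
      have h1 : (HahnSeries.single (-n) (1 : A) * (HahnSeries.C (↑v⁻¹ : A) * x)).coeff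
          ((i + n) + (-n)) = (1 : A) * (HahnSeries.C (↑v⁻¹ : A) * x).coeff (i + n) :=
        HahnSeries.coeff_single_mul_add
      have h2 : i + n + -n = i := by ring
      rw [h2] at h1
      rw [h1, one_mul, HahnSeries.C_apply, HahnSeries.coeff_single_zero_mul]
    have hh0 : h.coeff 0 = 1 := by
      rw [hhcoeff 0, zero_add, ← hv, Units.inv_mul]
    have hhneg : ∀ i : ℤ, i < 0 → IsNilpotent (h.coeff i) := by
      intro i hi
      rw [hhcoeff i]
      exact mem_nilradical.mp (Ideal.mul_mem_left _ _ (hnilp (i + n) (by omega)))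
    obtain ⟨F, g, hFu, hgsupp, hgmem, hfac⟩ := LUF.factor_main h hh0 hhneg
    obtain ⟨cu, hcu⟩ := hFu
    refine ⟨n, v * cu, PowerSeries.C (↑cu⁻¹ : A) * F, g, ?_, ?_, ?_, ?_, ?_⟩
    · rw [map_mul, PowerSeries.constantCoeff_C, ← hcu, Units.inv_mul]
    · have := hgsupp 0 le_rfl
      rw [HahnSeries.coeff_sub, HahnSeries.coeff_one, if_pos rfl] at this
      exact sub_eq_zero.mp this
    · intro i hi
      have := hgsupp i (le_of_lt hi)
      rwa [HahnSeries.coeff_sub, HahnSeries.coeff_one, if_neg (by omega), sub_zero] at this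
    · intro i hi
      have := hgmem i
      rwa [HahnSeries.coeff_sub, HahnSeries.coeff_one, if_neg (by omega), sub_zero,
        mem_nilradical] at this
    · -- final assembly
      have hss : (HahnSeries.single n (1 : A) : LaurentSeries A)
          * HahnSeries.single (-n) (1 : A) = 1 := by
        rw [HahnSeries.single_mul_single, add_neg_cancel, one_mul, HahnSeries.single_zero_one]
      have hCC : (HahnSeries.C (↑(v * cu) : A) : LaurentSeries A)
          * HahnSeries.C (↑cu⁻¹ : A) = HahnSeries.C (↑v : A) := by
        rw [← map_mul]
        congr 1
        rw [Units.val_mul, mul_assoc, Units.mul_inv, mul_one]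
      have hCv : (HahnSeries.C (↑v : A) : LaurentSeries A)
          * HahnSeries.C (↑v⁻¹ : A) = 1 := by
        rw [← map_mul, Units.mul_inv, map_one]
      calc (↑a : LaurentSeries A) = x := hxdef.symm
        _ = (HahnSeries.single n (1 : A) * HahnSeries.single (-n) (1 : A))
            * ((HahnSeries.C (↑v : A) * HahnSeries.C (↑v⁻¹ : A)) * x) := by
            rw [hss, hCv, one_mul, one_mul]
        _ = HahnSeries.single n (1 : A) * (HahnSeries.C (↑v : A) * h) := by
            rw [hhdef]; ring
        _ = HahnSeries.single n (1 : A) * (HahnSeries.C (↑v : A)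
            * (HahnSeries.ofPowerSeries ℤ A F * g)) := by rw [hfac]
        _ = HahnSeries.single n (1 : A) * HahnSeries.C (↑(v * cu) : A)
            * HahnSeries.ofPowerSeries ℤ A (PowerSeries.C (↑cu⁻¹ : A) * F) * g := by
            rw [map_mul, HahnSeries.ofPowerSeries_C, ← hCC]; ring
end

section
/- Let A be a nontrivial commutative ring with no nontrivial idempotents. Suppose t^n · a₀ · f · g = t^{n'} · a₀' · f' · g' in A((t)), where n, n' are integers, a₀, a₀' are units of A, f and f' are formal power series with constant coefficient 1, and g, g' are Laurent series whose coefficient in degree 0 equals 1, whose coefficients in positive degrees vanish, and whose coefficients in negative degrees are nilpotent. Then n = n', a₀ = a₀', f = f', and g = g'. -/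
namespace LaurentUniqAux

variable {A : Type*} [CommRing A]

lemma coeff_finsetSum {α : Type*} (s : Finset α) (F : α → HahnSeries ℤ A) (j : ℤ) :
    (∑ i ∈ s, F i).coeff j = ∑ i ∈ s, (F i).coeff j :=
  map_sum (HahnSeries.coeff.addMonoidHom j) F s

lemma nilp_mul_coeff {x y : HahnSeries ℤ A} {a : ℤ}
    (h : ∀ i j : ℤ, i + j = a → IsNilpotent (x.coeff i * y.coeff j)) :
    IsNilpotent ((x * y).coeff a) := by
  rw [HahnSeries.coeff_mul]
  refine isNilpotent_sum fun ij hij => ?_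
  rw [Finset.mem_addAntidiagonal] at hij
  exact h ij.1 ij.2 hij.2.2

lemma nilp_all_mul {x : HahnSeries ℤ A} (hx : ∀ i, IsNilpotent (x.coeff i))
    (y : HahnSeries ℤ A) (a : ℤ) : IsNilpotent ((x * y).coeff a) :=
  nilp_mul_coeff fun i j _ => (Commute.all _ _).isNilpotent_mul_right (hx i)

lemma pos_coeff_mul {x y : HahnSeries ℤ A} (hx : ∀ i : ℤ, 0 < i → x.coeff i = 0)
    (hy : ∀ i : ℤ, 0 < i → y.coeff i = 0) (a : ℤ) (ha : 0 < a) : (x * y).coeff a = 0 := by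
  rw [HahnSeries.coeff_mul]
  refine Finset.sum_eq_zero fun ij hij => ?_
  rw [Finset.mem_addAntidiagonal] at hij
  have hsum := hij.2.2
  rcases lt_or_ge 0 ij.1 with h | h
  · rw [hx _ h, zero_mul]
  · have : 0 < ij.2 := by omega
    rw [hy _ this, mul_zero]

lemma neg_coeff_mul {x y : HahnSeries ℤ A}
    (hx0 : ∀ i : ℤ, 0 < i → x.coeff i = 0) (hxn : ∀ i : ℤ, i < 0 → IsNilpotent (x.coeff i))
    (hy0 : ∀ i : ℤ, 0 < i → y.coeff i = 0) (hyn : ∀ i : ℤ, i < 0 → IsNilpotent (y.coeff i))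
    (a : ℤ) (ha : a < 0) : IsNilpotent ((x * y).coeff a) := by
  refine nilp_mul_coeff fun i j hij => ?_
  rcases lt_trichotomy i 0 with h | h | h
  · exact (Commute.all _ _).isNilpotent_mul_right (hxn i h)
  · subst h
    exact (Commute.all _ _).isNilpotent_mul_left (hyn j (by omega))
  · rw [hx0 i h, zero_mul]
    exact ⟨1, by simp⟩

lemma single_pow (i : ℤ) (c : A) (k : ℕ) :
    (HahnSeries.single i c) ^ k = HahnSeries.single ((k : ℤ) * i) (c ^ k) := by
  induction k with
  | zero => simp [HahnSeries.single_zero_one]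
  | succ k ih =>
    rw [pow_succ, ih, HahnSeries.single_mul_single, ← pow_succ]
    congr 1
    push_cast
    ring

lemma isNilpotent_of_coeffs (x : HahnSeries ℤ A) (h0 : ∀ i : ℤ, 0 ≤ i → x.coeff i = 0)
    (hn : ∀ i : ℤ, IsNilpotent (x.coeff i)) : IsNilpotent x := by
  by_cases hx : x = 0
  · exact hx ▸ ⟨1, by simp⟩
  have hne : x.support.Nonempty := HahnSeries.support_nonempty_iff.2 hx
  have hfin : x.support.Finite := by
    apply (Set.finite_Icc (x.isWF_support.min hne) 0).subset
    intro i hi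
    refine ⟨Set.IsWF.min_le _ hne hi, ?_⟩
    by_contra hlt
    push_neg at hlt
    exact hi (h0 i hlt.le)
  have hrep : x = ∑ i ∈ hfin.toFinset, HahnSeries.single i (x.coeff i) := by
    ext j
    rw [coeff_finsetSum]
    by_cases hj : j ∈ x.support
    · rw [Finset.sum_eq_single j]
      · rw [HahnSeries.coeff_single_same]
      · intro b _ hbj
        exact HahnSeries.coeff_single_of_ne (Ne.symm hbj)
      · intro h
        exact absurd (hfin.mem_toFinset.2 hj) h
    · have hz : x.coeff j = 0 := by rwa [HahnSeries.mem_support, not_not] at hj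
      rw [hz]
      refine (Finset.sum_eq_zero fun b _ => ?_).symm
      by_cases hbj : j = b
      · subst hbj
        rw [HahnSeries.coeff_single_same, hz]
      · exact HahnSeries.coeff_single_of_ne hbj
  rw [hrep]
  refine isNilpotent_sum fun i _ => ?_
  obtain ⟨k, hk⟩ := hn i
  exact ⟨k, by rw [single_pow, hk, HahnSeries.single_eq_zero]⟩

lemma ofPS_coeff_neg (x : PowerSeries A) (i : ℤ) (hi : i < 0) :
    (HahnSeries.ofPowerSeries ℤ A x).coeff i = 0 := by
  rw [HahnSeries.ofPowerSeries_apply]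
  refine HahnSeries.embDomain_notin_range ?_
  rintro ⟨n, rfl⟩
  exact not_lt.2 (Int.natCast_nonneg n) hi

lemma exists_inverse (g : HahnSeries ℤ A) (hg0 : g.coeff 0 = 1)
    (hgpos : ∀ i : ℤ, 0 < i → g.coeff i = 0)
    (hgneg : ∀ i : ℤ, i < 0 → IsNilpotent (g.coeff i)) :
    ∃ v : HahnSeries ℤ A, g * v = 1 ∧ (∀ i : ℤ, 0 < i → v.coeff i = 0) ∧
      (∀ i : ℤ, i < 0 → IsNilpotent (v.coeff i)) := by
  set N : HahnSeries ℤ A := g - 1 with hN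
  have h1c : ∀ i : ℤ, (1 : HahnSeries ℤ A).coeff i = if i = 0 then 1 else 0 := by
    intro i
    rw [HahnSeries.coeff_one]
    split <;> simp_all
  have hN0 : ∀ i : ℤ, 0 ≤ i → N.coeff i = 0 := by
    intro i hi
    rcases eq_or_lt_of_le hi with h | h
    · rw [hN, HahnSeries.coeff_sub, ← h, hg0, h1c]
      simp
    · rw [hN, HahnSeries.coeff_sub, hgpos i h, h1c]
      simp [h.ne']
  have hNn : ∀ i : ℤ, IsNilpotent (N.coeff i) := by
    intro i
    rcases lt_or_ge i 0 with h | h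
    · have : N.coeff i = g.coeff i := by
        rw [hN, HahnSeries.coeff_sub, h1c]
        simp [h.ne]
      rw [this]
      exact hgneg i h
    · rw [hN0 i h]
      exact ⟨1, by simp⟩
  obtain ⟨m, hm⟩ := isNilpotent_of_coeffs N hN0 hNn
  have hpos : ∀ k : ℕ, ∀ i : ℤ, 0 < i → ((-N : HahnSeries ℤ A) ^ k).coeff i = 0 := by
    intro k
    induction k with
    | zero =>
      intro i hi
      rw [pow_zero, h1c]
      simp [hi.ne']
    | succ k ih =>
      intro i hi
      rw [pow_succ]
      refine pos_coeff_mul ih ?_ i hi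
      intro j hj
      rw [HahnSeries.coeff_neg, hN0 j hj.le, neg_zero]
  have hNneg : ∀ i : ℤ, IsNilpotent ((-N : HahnSeries ℤ A).coeff i) := by
    intro i
    rw [HahnSeries.coeff_neg]
    exact (hNn i).neg
  have hneg : ∀ k : ℕ, ∀ i : ℤ, i < 0 → IsNilpotent (((-N : HahnSeries ℤ A) ^ k).coeff i) := by
    intro k i hi
    cases k with
    | zero =>
      rw [pow_zero, h1c]
      simp only [hi.ne, if_false]
      exact ⟨1, by simp⟩
    | succ k =>
      rw [pow_succ']
      exact nilp_all_mul hNneg _ i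
  refine ⟨∑ k ∈ Finset.range (m + 1), (-N) ^ k, ?_, ?_, ?_⟩
  · have hg : g = 1 + N := by rw [hN]; ring
    have hNm1 : (-N : HahnSeries ℤ A) ^ (m + 1) = 0 := by
      have : (N : HahnSeries ℤ A) ^ (m + 1) = 0 := by rw [pow_succ, hm, zero_mul]
      rw [show (-N : HahnSeries ℤ A) = (-1) * N by ring, mul_pow, this, mul_zero]
    have hgeom := geom_sum_mul (-N : HahnSeries ℤ A) (m + 1)
    rw [hNm1, zero_sub] at hgeom
    linear_combination (∑ k ∈ Finset.range (m + 1), (-N : HahnSeries ℤ A) ^ k) * hg - hgeom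
  · intro i hi
    rw [coeff_finsetSum]
    exact Finset.sum_eq_zero fun k _ => hpos k i hi
  · intro i hi
    rw [coeff_finsetSum]
    exact isNilpotent_sum fun k _ => hneg k i hi

lemma aux_le {A : Type*} [CommRing A] [Nontrivial A]
    (n n' : ℤ) (a₀' : Aˣ) (f f' : PowerSeries A) (g g' : LaurentSeries A)
    (hf' : PowerSeries.constantCoeff f' = 1)
    (hgpos : ∀ i : ℤ, 0 < i → g.coeff i = 0)
    (hgneg : ∀ i : ℤ, i < 0 → IsNilpotent (g.coeff i))
    (hg0' : g'.coeff 0 = 1) (hgpos' : ∀ i : ℤ, 0 < i → g'.coeff i = 0)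
    (hgneg' : ∀ i : ℤ, i < 0 → IsNilpotent (g'.coeff i))
    (a₀f : HahnSeries ℤ A) (ha₀f : ∀ i : ℤ, i < 0 → a₀f.coeff i = 0)
    (heq : HahnSeries.single n (1 : A) * a₀f * g =
          HahnSeries.single n' (1 : A) * HahnSeries.C ((a₀' : A)) *
            HahnSeries.ofPowerSeries ℤ A f' * g') :
    n ≤ n' := by
  by_contra hlt
  push_neg at hlt
  obtain ⟨v', hv1, hvpos, hvneg⟩ := exists_inverse g' hg0' hgpos' hgneg'
  set W : HahnSeries ℤ A := a₀f * (g * v') with hW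
  have e1 : (HahnSeries.single n (1 : A)) * HahnSeries.single (-n') 1 =
      HahnSeries.single (n - n') (1 : A) := by
    rw [HahnSeries.single_mul_single, mul_one, sub_eq_add_neg]
  have e2 : (HahnSeries.single n' (1 : A)) * HahnSeries.single (-n') 1 = 1 := by
    rw [HahnSeries.single_mul_single, mul_one, add_neg_cancel, HahnSeries.single_zero_one]
  have key : HahnSeries.single (n - n') (1 : A) * W =
      HahnSeries.C ((a₀' : A)) * HahnSeries.ofPowerSeries ℤ A f' := by
    calc HahnSeries.single (n - n') (1 : A) * W
        = (HahnSeries.single n (1 : A) * a₀f * g) *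
            (HahnSeries.single (-n') 1 * v') := by rw [← e1, hW]; ring
      _ = (HahnSeries.single n' (1 : A) * HahnSeries.C ((a₀' : A)) *
            HahnSeries.ofPowerSeries ℤ A f' * g') *
            (HahnSeries.single (-n') 1 * v') := by rw [heq]
      _ = (HahnSeries.single n' (1 : A) * HahnSeries.single (-n') 1) * (g' * v') *
            (HahnSeries.C ((a₀' : A)) * HahnSeries.ofPowerSeries ℤ A f') := by ring
      _ = _ := by rw [e2, hv1, one_mul, one_mul]
  have hLnil : IsNilpotent ((HahnSeries.single (n - n') (1 : A) * W).coeff 0) := by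
    have hcoeff : (HahnSeries.single (n - n') (1 : A) * W).coeff 0 = W.coeff (-(n - n')) := by
      have h := HahnSeries.coeff_single_mul_add (r := (1 : A)) (x := W)
        (a := -(n - n')) (b := n - n')
      rw [neg_add_cancel, one_mul] at h
      exact h
    rw [hcoeff]
    refine nilp_mul_coeff fun i j hij => ?_
    rcases lt_or_ge i 0 with h | h
    · rw [ha₀f i h, zero_mul]
      exact ⟨1, by simp⟩
    · have hj : j < 0 := by omega
      exact (Commute.all _ _).isNilpotent_mul_left
        (neg_coeff_mul hgpos hgneg hvpos hvneg j hj)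
  rw [key] at hLnil
  have hRH : (HahnSeries.C ((a₀' : A)) * HahnSeries.ofPowerSeries ℤ A f').coeff 0 = (a₀' : A) := by
    rw [← HahnSeries.ofPowerSeries_C, ← map_mul]
    have h := HahnSeries.ofPowerSeries_apply_coeff (Γ := ℤ) (R := A) (PowerSeries.C (a₀' : A) * f') 0
    rw [Nat.cast_zero] at h
    rw [h]
    simp [hf']
  rw [hRH] at hLnil
  obtain ⟨k, hk⟩ := hLnil
  have : (1 : A) = 0 := by
    calc (1 : A) = ((a₀'⁻¹ : Aˣ) : A) ^ k * ((a₀' : A)) ^ k := by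
          rw [← mul_pow, Units.inv_mul, one_pow]
      _ = 0 := by rw [hk, mul_zero]
  exact one_ne_zero this

end LaurentUniqAux


/-- Uniqueness of the factorization in Corollary 4.3.5: over a nontrivial commutative
ring with no nontrivial idempotents, if
`t^n · a₀ · f · g = t^{n'} · a₀' · f' · g'` with `a₀, a₀' ∈ Aˣ`, `f, f'` power series
with constant coefficient `1`, and `g, g'` Laurent series with coefficient `1` in
degree `0`, vanishing positive coefficients and nilpotent negative coefficients, then
`n = n'`, `a₀ = a₀'`, `f = f'` and `g = g'`. -/
theorem laurent_unit_factorization_unique (A : Type*) [CommRing A] [Nontrivial A]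
    (hA : ∀ e : A, IsIdempotentElem e → e = 0 ∨ e = 1)
    (n n' : ℤ) (a₀ a₀' : Aˣ) (f f' : PowerSeries A) (g g' : LaurentSeries A)
    (hf  : PowerSeries.constantCoeff f = 1)
    (hf' : PowerSeries.constantCoeff f' = 1)
    (hg0 : g.coeff 0 = 1) (hgpos : ∀ i : ℤ, 0 < i → g.coeff i = 0)
    (hgneg : ∀ i : ℤ, i < 0 → IsNilpotent (g.coeff i))
    (hg0' : g'.coeff 0 = 1) (hgpos' : ∀ i : ℤ, 0 < i → g'.coeff i = 0)
    (hgneg' : ∀ i : ℤ, i < 0 → IsNilpotent (g'.coeff i))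
    (heq : HahnSeries.single n (1 : A) * HahnSeries.C (a₀ : A) *
            HahnSeries.ofPowerSeries ℤ A f * g =
          HahnSeries.single n' (1 : A) * HahnSeries.C (a₀' : A) *
            HahnSeries.ofPowerSeries ℤ A f' * g') :
    n = n' ∧ a₀ = a₀' ∧ f = f' ∧ g = g' := by
  have ha₀f : ∀ (a : Aˣ) (p : PowerSeries A) (i : ℤ), i < 0 →
      (HahnSeries.C ((a : A)) * HahnSeries.ofPowerSeries ℤ A p).coeff i = 0 := by
    intro a p i hi
    rw [← HahnSeries.ofPowerSeries_C, ← map_mul]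
    exact LaurentUniqAux.ofPS_coeff_neg _ i hi
  have heq2 : HahnSeries.single n (1 : A) *
      (HahnSeries.C (a₀ : A) * HahnSeries.ofPowerSeries ℤ A f) * g =
      HahnSeries.single n' (1 : A) * HahnSeries.C (a₀' : A) *
        HahnSeries.ofPowerSeries ℤ A f' * g' := by
    rw [← mul_assoc]; exact heq
  have heq3 : HahnSeries.single n' (1 : A) *
      (HahnSeries.C (a₀' : A) * HahnSeries.ofPowerSeries ℤ A f') * g' =
      HahnSeries.single n (1 : A) * HahnSeries.C (a₀ : A) *
        HahnSeries.ofPowerSeries ℤ A f * g := by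
    rw [← mul_assoc]; exact heq.symm
  have hnn : n = n' :=
    le_antisymm
      (LaurentUniqAux.aux_le n n' a₀' f f' g g' hf' hgpos hgneg hg0' hgpos' hgneg' _
        (ha₀f a₀ f) heq2)
      (LaurentUniqAux.aux_le n' n a₀ f' f g' g hf hgpos' hgneg' hg0 hgpos hgneg _
        (ha₀f a₀' f') heq3)
  subst hnn
  obtain ⟨v', hv1, hvpos, hvneg⟩ := LaurentUniqAux.exists_inverse g' hg0' hgpos' hgneg'
  have e2 : (HahnSeries.single n (1 : A)) * HahnSeries.single (-n) 1 = 1 := by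
    rw [HahnSeries.single_mul_single, mul_one, add_neg_cancel, HahnSeries.single_zero_one]
  set F := HahnSeries.ofPowerSeries ℤ A f with hF
  set F' := HahnSeries.ofPowerSeries ℤ A f' with hF'def
  set Ca : HahnSeries ℤ A := HahnSeries.C ((a₀ : A)) with hCa
  set Ca' : HahnSeries ℤ A := HahnSeries.C ((a₀' : A)) with hCa'
  have key : (Ca * F) * (g * v') = Ca' * F' := by
    calc (Ca * F) * (g * v')
        = (HahnSeries.single n 1 * HahnSeries.single (-n) 1) * ((Ca * F) * (g * v')) := by
          rw [e2, one_mul]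
      _ = (HahnSeries.single n 1 * Ca * F * g) * (HahnSeries.single (-n) 1 * v') := by ring
      _ = (HahnSeries.single n 1 * Ca' * F' * g') * (HahnSeries.single (-n) 1 * v') := by
          rw [heq]
      _ = (HahnSeries.single n 1 * HahnSeries.single (-n) 1) * (g' * v') * (Ca' * F') := by
          ring
      _ = Ca' * F' := by rw [e2, hv1, one_mul, one_mul]
  have hp : IsUnit (PowerSeries.C (a₀ : A) * f) := by
    rw [PowerSeries.isUnit_iff_constantCoeff, map_mul, PowerSeries.constantCoeff_C, hf, mul_one]
    exact a₀.isUnit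
  obtain ⟨q, hpq⟩ := hp.exists_right_inv
  have hCF : Ca * F = HahnSeries.ofPowerSeries ℤ A (PowerSeries.C (a₀ : A) * f) := by
    rw [map_mul, HahnSeries.ofPowerSeries_C]
  have hCF' : Ca' * F' = HahnSeries.ofPowerSeries ℤ A (PowerSeries.C (a₀' : A) * f') := by
    rw [map_mul, HahnSeries.ofPowerSeries_C]
  have hh : g * v' =
      HahnSeries.ofPowerSeries ℤ A (q * (PowerSeries.C (a₀' : A) * f')) := by
    calc g * v'
        = (HahnSeries.ofPowerSeries ℤ A ((PowerSeries.C (a₀ : A) * f) * q)) * (g * v') := by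
          rw [hpq, map_one, one_mul]
      _ = HahnSeries.ofPowerSeries ℤ A q * ((Ca * F) * (g * v')) := by
          rw [map_mul, hCF]; ring
      _ = HahnSeries.ofPowerSeries ℤ A q * (Ca' * F') := by rw [key]
      _ = _ := by rw [hCF', ← map_mul]
  have hhpos : ∀ i : ℤ, 0 < i → (g * v').coeff i = 0 := fun i hi =>
    LaurentUniqAux.pos_coeff_mul hgpos hvpos i hi
  have hCgv : g * v' = HahnSeries.C ((g * v').coeff 0) := by
    ext j
    rcases eq_or_ne j 0 with rfl | hj
    · rw [HahnSeries.C_apply, HahnSeries.coeff_single_same]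
    · rw [HahnSeries.C_apply, HahnSeries.coeff_single_of_ne hj]
      rcases hj.lt_or_gt with hneg | hpos
      · rw [hh]; exact LaurentUniqAux.ofPS_coeff_neg _ j hneg
      · exact hhpos j hpos
  have hgg : (g * v') * g' = g := by
    calc (g * v') * g' = g * (g' * v') := by ring
      _ = g := by rw [hv1, mul_one]
  have hc1 : (g * v').coeff 0 = 1 := by
    have h2 : ((g * v') * g').coeff 0 = (g * v').coeff 0 * g'.coeff 0 := by
      conv_lhs => rw [hCgv, HahnSeries.C_apply]
      have h := HahnSeries.coeff_single_mul_add (r := (g * v').coeff 0) (x := g')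
        (a := (0 : ℤ)) (b := (0 : ℤ))
      rw [add_zero] at h
      exact h
    rw [hgg, hg0, hg0', mul_one] at h2
    exact h2.symm
  have hone : g * v' = 1 := by rw [hCgv, hc1, map_one]
  have hgeq : g = g' := by rw [← hgg, hone, one_mul]
  have hPS : PowerSeries.C (a₀ : A) * f = PowerSeries.C (a₀' : A) * f' := by
    apply HahnSeries.ofPowerSeries_injective (Γ := ℤ)
    rw [← hCF, ← hCF', ← key, hone, mul_one]
  have hconst : (a₀ : A) = (a₀' : A) := by
    have h := congrArg (PowerSeries.constantCoeff) hPS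
    simpa [hf, hf'] using h
  have ha : a₀ = a₀' := Units.ext hconst
  have hff : f = f' := by
    have hu : IsUnit (PowerSeries.C (a₀ : A)) := a₀.isUnit.map (PowerSeries.C)
    refine hu.mul_left_cancel ?_
    rw [hPS, hconst]
  exact ⟨rfl, ha, hff, hgeq⟩
end

section
/- Let A be a nontrivial reduced commutative ring with no nontrivial idempotents, and let a be a nonzero Laurent series in A((t)) with lowest nonzero coefficient a_n (i.e. the coefficient of t^n in a is a_n ≠ 0 and the coefficient of t^i in a is 0 for all i < n). Then a is a unit of A((t)) if and only if a_n is a unit of A. -/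
open PowerSeries HahnSeries

private lemma key_aux {A : Type*} [CommRing A] [IsReduced A]
    (hA : ∀ e : A, IsIdempotentElem e → e = 0 ∨ e = 1)
    (f g : PowerSeries A) (N : ℕ) (h : f * g = PowerSeries.X ^ N)
    (hf : PowerSeries.coeff 0 f ≠ 0) : IsUnit (PowerSeries.coeff 0 f) := by
  set α : ℕ → A := fun i => PowerSeries.coeff i f with hα
  set β : ℕ → A := fun j => PowerSeries.coeff j g with hβ
  have hc : ∀ s : ℕ, (∑ p ∈ Finset.HasAntidiagonal.antidiagonal s, α p.1 * β p.2) = if s = N then 1 else 0 := by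
    intro s
    rw [← PowerSeries.coeff_mul, h, PowerSeries.coeff_X_pow]
  -- Claim 1: products of coefficients below level N vanish
  have claim1 : ∀ s, s < N → ∀ i j, i + j = s → α i * β j = 0 := by
    intro s
    induction s using Nat.strong_induction_on with
    | _ s IH =>
      intro hs i j hij
      have E := hc s
      rw [if_neg (Nat.ne_of_lt hs)] at E
      have E2 : (∑ p ∈ Finset.HasAntidiagonal.antidiagonal s, α p.1 * β p.2 * (α i * β j))
          = α i * β j * (α i * β j) := by
        rw [Finset.sum_eq_single (i, j)]
        · rintro ⟨p, q⟩ hpq hne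
          rw [Finset.HasAntidiagonal.mem_antidiagonal] at hpq
          rcases lt_trichotomy p i with hlt | heq | hgt
          · have h0 : α p * β j = 0 := IH (p + j) (by omega) (by omega) p j rfl
            calc α p * β q * (α i * β j) = α p * β j * (α i * β q) := by ring
            _ = 0 := by rw [h0, zero_mul]
          · exfalso; apply hne
            have : q = j := by omega
            simp [heq, this]
          · have h0 : α i * β q = 0 := IH (i + q) (by omega) (by omega) i q rfl
            calc α p * β q * (α i * β j) = α i * β q * (α p * β j) := by ring
            _ = 0 := by rw [h0, zero_mul]
        · intro hmem; exact absurd (Finset.HasAntidiagonal.mem_antidiagonal.2 hij) hmem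
      rw [← Finset.sum_mul, E, zero_mul] at E2
      have hsq : (α i * β j) ^ 2 = 0 := by rw [sq]; exact E2.symm
      exact IsReduced.eq_zero _ ⟨2, hsq⟩
  have hEN := hc N
  rw [if_pos rfl] at hEN
  set e := α 0 * β N with he
  have hidem : IsIdempotentElem e := by
    have E2 : (∑ p ∈ Finset.HasAntidiagonal.antidiagonal N, α p.1 * β p.2 * e) = e * e := by
      rw [Finset.sum_eq_single (0, N)]
      · rintro ⟨p, q⟩ hpq hne
        rw [Finset.HasAntidiagonal.mem_antidiagonal] at hpq
        have hp : 0 < p := by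
          rcases Nat.eq_zero_or_pos p with h0 | h0
          · exfalso; apply hne; subst h0; simp at hpq ⊢; omega
          · exact h0
        have h0 : α 0 * β q = 0 := claim1 q (by omega) 0 q (zero_add q)
        calc α p * β q * e = α 0 * β q * (α p * β N) := by rw [he]; ring
        _ = 0 := by rw [h0, zero_mul]
      · intro hmem
        exact absurd (Finset.HasAntidiagonal.mem_antidiagonal.2 (zero_add N)) hmem
    rw [← Finset.sum_mul, hEN, one_mul] at E2
    exact E2.symm
  rcases hA e hidem with he0 | he1
  · -- e = 0 leads to a contradiction with α 0 ≠ 0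
    exfalso
    have claim3 : ∀ j, α 0 * β j = 0 := by
      intro j
      induction j using Nat.strong_induction_on with
      | _ j IH =>
        rcases lt_trichotomy j N with hj | hj | hj
        · exact claim1 j hj 0 j (zero_add j)
        · have h0 := he0
          rw [he] at h0
          rw [hj]
          exact h0
        · have E := hc j
          rw [if_neg (by omega)] at E
          have E2 : (∑ p ∈ Finset.HasAntidiagonal.antidiagonal j, α 0 * (α p.1 * β p.2))
              = α 0 * (α 0 * β j) := by
            rw [Finset.sum_eq_single (0, j)]
            · rintro ⟨p, q⟩ hpq hne
              rw [Finset.HasAntidiagonal.mem_antidiagonal] at hpq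
              have hp : 0 < p := by
                rcases Nat.eq_zero_or_pos p with h0 | h0
                · exfalso; apply hne; subst h0; simp at hpq ⊢; omega
                · exact h0
              have h0 : α 0 * β q = 0 := IH q (by omega)
              calc α 0 * (α p * β q) = α p * (α 0 * β q) := by ring
              _ = 0 := by rw [h0, mul_zero]
            · intro hmem
              exact absurd (Finset.HasAntidiagonal.mem_antidiagonal.2 (zero_add j)) hmem
          rw [← Finset.mul_sum, E, mul_zero] at E2
          have hsq : (α 0 * β j) ^ 2 = 0 := by
            calc (α 0 * β j) ^ 2 = α 0 * (α 0 * β j) * β j := by ring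
            _ = 0 := by rw [← E2, zero_mul]
          exact IsReduced.eq_zero _ ⟨2, hsq⟩
    have hg : PowerSeries.C (α 0) * g = 0 := by
      ext j
      rw [PowerSeries.coeff_C_mul, map_zero]
      exact claim3 j
    have hXN : PowerSeries.C (α 0) * PowerSeries.X ^ N = 0 := by
      rw [← h, show PowerSeries.C (α 0) * (f * g) = f * (PowerSeries.C (α 0) * g) by ring,
        hg, mul_zero]
    have : α 0 = 0 := by
      have := congrArg (PowerSeries.coeff N) hXN
      rwa [PowerSeries.coeff_C_mul, PowerSeries.coeff_X_pow, if_pos rfl, mul_one, map_zero]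
        at this
    exact hf this
  · exact IsUnit.of_mul_eq_one (β N) (he ▸ he1)

/-- Specialization of Lemma 4.3.4 to reduced rings: over a nontrivial reduced
commutative ring with no nontrivial idempotents, a nonzero Laurent series with lowest
nonzero coefficient `a.coeff n` is a unit of `A((t))` iff `a.coeff n` is a unit of `A`. -/
theorem laurent_isUnit_iff_of_reduced (A : Type*) [CommRing A] [Nontrivial A]
    [IsReduced A] (hA : ∀ e : A, IsIdempotentElem e → e = 0 ∨ e = 1)
    (a : LaurentSeries A) (n : ℤ)
    (hn : a.coeff n ≠ 0) (hlow : ∀ i : ℤ, i < n → a.coeff i = 0) :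
    IsUnit a ↔ IsUnit (a.coeff n) := by
  have ha0 : a ≠ 0 := fun h => hn (by simp [h])
  have horder : a.order = n := by
    refine le_antisymm (HahnSeries.order_le_of_coeff_ne_zero hn) ?_
    by_contra hlt
    push_neg at hlt
    exact ha0 (HahnSeries.coeff_order_eq_zero.1 (hlow _ hlt))
  set f := a.powerSeriesPart with hfdef
  have hcoeff : PowerSeries.coeff 0 f = a.coeff n := by
    rw [hfdef, LaurentSeries.powerSeriesPart_coeff, horder]
    norm_num
  have hafa : (HahnSeries.single n 1 : LaurentSeries A) * (f : LaurentSeries A) = a := by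
    rw [hfdef, ← horder]
    exact a.single_order_mul_powerSeriesPart
  constructor
  · intro hu
    obtain ⟨b, hab⟩ := hu.exists_right_inv
    have hb0 : b ≠ 0 := by
      rintro rfl
      rw [mul_zero] at hab
      exact zero_ne_one hab
    set m := b.order with hm
    set g := b.powerSeriesPart with hgdef
    have hbg : (HahnSeries.single m 1 : LaurentSeries A) * (g : LaurentSeries A) = b :=
      b.single_order_mul_powerSeriesPart
    have key : (HahnSeries.single (n + m) 1 : LaurentSeries A) *
        ((f * g : PowerSeries A) : LaurentSeries A) = 1 := by
      rw [PowerSeries.coe_mul]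
      calc (HahnSeries.single (n + m) 1 : LaurentSeries A) *
            ((f : LaurentSeries A) * (g : LaurentSeries A))
          = ((HahnSeries.single n 1 : LaurentSeries A) * (f : LaurentSeries A)) *
            ((HahnSeries.single m 1 : LaurentSeries A) * (g : LaurentSeries A)) := by
            rw [show ((HahnSeries.single n 1 : LaurentSeries A) * (f : LaurentSeries A)) *
              ((HahnSeries.single m 1 : LaurentSeries A) * (g : LaurentSeries A)) =
              ((HahnSeries.single n 1 : LaurentSeries A) *
                (HahnSeries.single m 1 : LaurentSeries A)) *
              ((f : LaurentSeries A) * (g : LaurentSeries A)) by ring,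
              HahnSeries.single_mul_single, mul_one]
      _ = a * b := by rw [hafa, hbg]
      _ = 1 := hab
    have h2 : ((f * g : PowerSeries A) : LaurentSeries A) =
        HahnSeries.single (-(n + m)) 1 := by
      have := congrArg (fun x => (HahnSeries.single (-(n + m)) 1 : LaurentSeries A) * x) key
      simp only [mul_one] at this
      rw [← this, ← mul_assoc, HahnSeries.single_mul_single, neg_add_cancel, mul_one,
        HahnSeries.single_zero_one, one_mul]
    have hnm : n + m ≤ 0 := by
      by_contra hpos
      push_neg at hpos
      have := congrArg (fun x : LaurentSeries A => x.coeff (-(n + m))) h2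
      simp only [PowerSeries.coeff_coe, HahnSeries.coeff_single_same] at this
      rw [if_pos (by omega : -(n + m) < 0)] at this
      exact zero_ne_one this
    set N := (-(n + m)).toNat with hN
    have hfg : f * g = PowerSeries.X ^ N := by
      apply HahnSeries.ofPowerSeries_injective (Γ := ℤ)
      rw [HahnSeries.ofPowerSeries_X_pow]
      rw [show ((N : ℕ) : ℤ) = -(n + m) by omega]
      exact h2
    have := key_aux hA f g N hfg (hcoeff ▸ hn)
    rwa [hcoeff] at this
  · intro hu
    rw [← hafa]
    refine IsUnit.mul ?_ ?_
    · exact IsUnit.of_mul_eq_one (HahnSeries.single (-n) 1)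
        (by rw [HahnSeries.single_mul_single, add_neg_cancel, mul_one,
          HahnSeries.single_zero_one])
    · exact (PowerSeries.isUnit_iff_constantCoeff.2
        (by rwa [← PowerSeries.coeff_zero_eq_constantCoeff, hcoeff])).map
        (HahnSeries.ofPowerSeries ℤ A)
end

section
/- Let A be a commutative ring, N ≥ 1, and g, h invertible N×N matrices with entries in the Laurent series ring A((t)). Let L = A[[t]]^N ⊆ A((t))^N be the standard lattice. Then there exists an integer a such that t^a·L ⊆ g·L and t^a·L ⊆ h·L, and the quotient A-modules (g·L)/(t^a·L) and (h·L)/(t^a·L) are both finitely generated and projective over A. -/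
noncomputable section

variable (A : Type*) [CommRing A] (N : ℕ)

/-- The subring `A[[t]] ⊆ A((t))` of power series, as an `A`-submodule of the
Laurent series ring: the series whose coefficients in negative degrees vanish. -/
def powerSeriesPart' : Submodule A (LaurentSeries A) where
  carrier := {x | ∀ i : ℤ, i < 0 → x.coeff i = 0}
  add_mem' := by
    intro x y hx hy i hi
    simp [HahnSeries.coeff_add, hx i hi, hy i hi]
  zero_mem' := by intro i hi; simp
  smul_mem' := by
    intro c x hx i hi
    simp [HahnSeries.coeff_smul, hx i hi]

/-- The standard lattice `L = A[[t]]^N ⊆ A((t))^N`, as an `A`-submodule. -/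
def stdLattice : Submodule A (Fin N → LaurentSeries A) :=
  Submodule.pi Set.univ fun _ => powerSeriesPart' A

variable {A N}

/-- The lattice `g·L`: the image of the standard lattice `L = A[[t]]^N` under the
`A((t))`-linear map of `A((t))^N` given by the matrix `g`. -/
def matLattice (g : Matrix (Fin N) (Fin N) (LaurentSeries A)) :
    Submodule A (Fin N → LaurentSeries A) where
  carrier := g.mulVec '' (stdLattice A N)
  add_mem' := by
    rintro _ _ ⟨x, hx, rfl⟩ ⟨y, hy, rfl⟩
    exact ⟨x + y, (stdLattice A N).add_mem hx hy, (Matrix.mulVec_add g x y).symm ▸ rfl⟩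
  zero_mem' := ⟨0, (stdLattice A N).zero_mem, Matrix.mulVec_zero g⟩
  smul_mem' := by
    rintro a _ ⟨x, hx, rfl⟩
    refine ⟨a • x, (stdLattice A N).smul_mem a hx, ?_⟩
    funext i
    show (Matrix.mulVec g fun j => a • x j) i = a • Matrix.mulVec g x i
    simp only [Matrix.mulVec, dotProduct, ← HahnSeries.single_zero_mul_eq_smul,
      Finset.mul_sum]
    exact Finset.sum_congr rfl fun j _ => by ring

/-- The lattice `c·L = { c • x : x ∈ L }` for a scalar `c ∈ A((t))`. -/
def smulLattice (c : LaurentSeries A) :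
    Submodule A (Fin N → LaurentSeries A) where
  carrier := (fun x : Fin N → LaurentSeries A => fun i => c * x i) '' (stdLattice A N)
  add_mem' := by
    rintro _ _ ⟨x, hx, rfl⟩ ⟨y, hy, rfl⟩
    refine ⟨x + y, (stdLattice A N).add_mem hx hy, ?_⟩
    funext i; simp [mul_add]
  zero_mem' := ⟨0, (stdLattice A N).zero_mem, by funext i; simp⟩
  smul_mem' := by
    rintro a _ ⟨x, hx, rfl⟩
    refine ⟨a • x, (stdLattice A N).smul_mem a hx, ?_⟩
    funext i
    show c * (a • x) i = a • (c * x i)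
    simp only [Pi.smul_apply, ← HahnSeries.single_zero_mul_eq_smul]
    ring


namespace Lemma331Aux

open HahnSeries

variable {A : Type*} [CommRing A] {N : ℕ}

/-- `x` has all coefficients in degrees `< c` equal to zero. -/
def bdd (c : ℤ) (x : LaurentSeries A) : Prop := ∀ i : ℤ, i < c → x.coeff i = 0

lemma bdd.mono {c c' : ℤ} (h : c' ≤ c) {x : LaurentSeries A} (hx : bdd c x) : bdd c' x :=
  fun i hi => hx i (hi.trans_le h)

lemma bdd_zero (c : ℤ) : bdd c (0 : LaurentSeries A) := fun i _ => rfl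

lemma bdd_add {c : ℤ} {x y : LaurentSeries A} (hx : bdd c x) (hy : bdd c y) :
    bdd c (x + y) := fun i hi => by
  simp [HahnSeries.coeff_add, hx i hi, hy i hi]

lemma bdd_sub {c : ℤ} {x y : LaurentSeries A} (hx : bdd c x) (hy : bdd c y) :
    bdd c (x - y) := fun i hi => by
  simp [HahnSeries.coeff_sub, hx i hi, hy i hi]

lemma bdd_sum {c : ℤ} {ι : Type*} (s : Finset ι) (f : ι → LaurentSeries A)
    (hf : ∀ j ∈ s, bdd c (f j)) : bdd c (∑ j ∈ s, f j) := by
  classical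
  induction s using Finset.induction_on with
  | empty => simpa using bdd_zero c
  | @insert a s' hj ih =>
    rw [Finset.sum_insert hj]
    exact bdd_add (hf a (Finset.mem_insert_self a s'))
      (ih fun j hjs => hf j (Finset.mem_insert_of_mem hjs))

lemma bdd_mul {c d : ℤ} {x y : LaurentSeries A} (hx : bdd c x) (hy : bdd d y) :
    bdd (c + d) (x * y) := by
  intro i hi
  rw [HahnSeries.coeff_mul]
  refine Finset.sum_eq_zero fun ij hij => ?_
  rw [Finset.mem_addAntidiagonal] at hij
  obtain ⟨h1, h2, h3⟩ := hij
  by_cases hc : ij.1 < c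
  · rw [hx ij.1 hc, zero_mul]
  · have : ij.2 < d := by omega
    rw [hy ij.2 this, mul_zero]

lemma bdd_single (c : ℤ) (r : A) : bdd c (HahnSeries.single c r : LaurentSeries A) := by
  intro i hi
  rw [HahnSeries.coeff_single_of_ne (by omega)]

lemma exists_bdd (x : LaurentSeries A) : ∃ n : ℕ, bdd (-(n : ℤ)) x := by
  by_cases hx : x = 0
  · exact ⟨0, hx ▸ bdd_zero _⟩
  · refine ⟨(-(min x.order 0)).toNat, ?_⟩
    refine bdd.mono ?_ (fun i hi => HahnSeries.coeff_eq_zero_of_lt_order hi)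
    omega

lemma exists_bdd_mat (g : Matrix (Fin N) (Fin N) (LaurentSeries A)) :
    ∃ n : ℕ, ∀ i j, bdd (-(n : ℤ)) (g i j) := by
  choose F hF using fun p : Fin N × Fin N => exists_bdd (g p.1 p.2)
  refine ⟨Finset.univ.sup F, fun i j => (hF (i, j)).mono ?_⟩
  have : F (i, j) ≤ Finset.univ.sup F := Finset.le_sup (Finset.mem_univ _)
  omega

end Lemma331Aux

namespace Lemma331Aux

variable {A : Type*} [CommRing A] {N : ℕ}

lemma coeff_sum {ι : Type*} (s : Finset ι) (f : ι → LaurentSeries A) (j : ℤ) :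
    (∑ k ∈ s, f k).coeff j = ∑ k ∈ s, (f k).coeff j :=
  map_sum (HahnSeries.coeff.addMonoidHom j) f s

lemma bdd_mulVec {c d : ℤ} {G : Matrix (Fin N) (Fin N) (LaurentSeries A)}
    (hG : ∀ i j, bdd c (G i j)) {x : Fin N → LaurentSeries A}
    (hx : ∀ j, bdd d (x j)) (i : Fin N) : bdd (c + d) (G.mulVec x i) := by
  show bdd (c + d) (∑ j : Fin N, G i j * x j)
  exact bdd_sum _ _ fun j _ => bdd_mul (hG i j) (hx j)

lemma mem_std_iff {x : Fin N → LaurentSeries A} :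
    x ∈ stdLattice A N ↔ ∀ i, bdd 0 (x i) := by
  constructor
  · intro hx i
    exact Submodule.mem_pi.1 hx i (Set.mem_univ i)
  · intro hx
    exact Submodule.mem_pi.2 fun i _ => hx i

lemma mem_mat_iff {G : Matrix (Fin N) (Fin N) (LaurentSeries A)} {x : Fin N → LaurentSeries A} :
    x ∈ matLattice G ↔ ∃ y ∈ stdLattice A N, G.mulVec y = x := Iff.rfl

lemma mem_smul_iff {a : ℤ} {x : Fin N → LaurentSeries A} :
    x ∈ smulLattice (HahnSeries.single a (1 : A)) ↔ ∀ i, bdd a (x i) := by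
  constructor
  · rintro ⟨y, hy, rfl⟩ i
    have : bdd (a + 0) (HahnSeries.single a (1 : A) * y i) :=
      bdd_mul (bdd_single a 1) (mem_std_iff.1 hy i)
    simpa using this
  · intro hx
    refine ⟨fun i => HahnSeries.single (-a) (1 : A) * x i, mem_std_iff.2 fun i => ?_, ?_⟩
    · have : bdd (-a + a) (HahnSeries.single (-a) (1 : A) * x i) :=
        bdd_mul (bdd_single (-a) 1) (hx i)
      simpa using this
    · funext i
      show HahnSeries.single a (1:A) * (HahnSeries.single (-a) (1:A) * x i) = x i
      rw [← mul_assoc, HahnSeries.single_mul_single, one_mul, add_neg_cancel,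
        HahnSeries.single_zero_one, one_mul]

/-- Keep only the coefficients in nonnegative degrees. -/
def posPart : LaurentSeries A →ₗ[A] LaurentSeries A where
  toFun x :=
    ⟨fun i => if 0 ≤ i then x.coeff i else 0, x.isPWO_support.mono (by
      intro i hi
      simp only [Function.mem_support] at hi ⊢
      by_cases h : 0 ≤ i
      · simpa [h] using hi
      · simp [h] at hi)⟩
  map_add' x y := by
    ext j
    show (if 0 ≤ j then (x + y).coeff j else 0) = _
    simp only [HahnSeries.coeff_add]
    show _ = (if 0 ≤ j then x.coeff j else 0) + (if 0 ≤ j then y.coeff j else 0)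
    split <;> simp
  map_smul' a x := by
    ext j
    show (if 0 ≤ j then (a • x).coeff j else 0) = _
    show _ = a • (if 0 ≤ j then x.coeff j else 0)
    rw [HahnSeries.coeff_smul]
    split <;> simp

lemma posPart_coeff (x : LaurentSeries A) (j : ℤ) :
    (posPart x).coeff j = if 0 ≤ j then x.coeff j else 0 := rfl

lemma bdd_posPart (x : LaurentSeries A) : bdd 0 (posPart x) := fun j hj => by
  rw [posPart_coeff, if_neg (not_le.2 hj)]

lemma posPart_eq_self {x : LaurentSeries A} (hx : bdd 0 x) : posPart x = x := by
  ext j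
  rw [posPart_coeff]
  by_cases h : 0 ≤ j
  · rw [if_pos h]
  · rw [if_neg h, hx j (not_le.1 h)]

end Lemma331Aux

namespace Lemma331Aux

variable {A : Type*} [CommRing A] {N : ℕ}

/-- Insert coefficients in the window `[-n, n)`. -/
def alphaMap (n : ℕ) : (Fin N → Fin (2 * n) → A) →ₗ[A] (Fin N → LaurentSeries A) :=
  LinearMap.pi fun i => ∑ k : Fin (2 * n),
    (HahnSeries.single.linearMap ((-(n : ℤ)) + k)) ∘ₗ LinearMap.proj k ∘ₗ LinearMap.proj i

lemma alphaMap_apply (n : ℕ) (f : Fin N → Fin (2 * n) → A) (i : Fin N) :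
    alphaMap n f i = ∑ k : Fin (2 * n), HahnSeries.single ((-(n : ℤ)) + k) (f i k) := by
  simp only [alphaMap, LinearMap.pi_apply, LinearMap.sum_apply, LinearMap.comp_apply,
    LinearMap.proj_apply]
  rfl

/-- Extract the coefficients in the window `[-n, n)`. -/
def betaMap (n : ℕ) : (Fin N → LaurentSeries A) →ₗ[A] (Fin N → Fin (2 * n) → A) :=
  LinearMap.pi fun i => LinearMap.pi fun k =>
    (HahnSeries.coeff.linearMap ((-(n : ℤ)) + k)) ∘ₗ LinearMap.proj i

lemma betaMap_apply (n : ℕ) (x : Fin N → LaurentSeries A) (i : Fin N) (k : Fin (2 * n)) :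
    betaMap n x i k = (x i).coeff ((-(n : ℤ)) + k) := rfl

/-- `mulVec` by a fixed matrix, as an `A`-linear map. -/
def mulVecA (G : Matrix (Fin N) (Fin N) (LaurentSeries A)) :
    (Fin N → LaurentSeries A) →ₗ[A] (Fin N → LaurentSeries A) where
  toFun x := G.mulVec x
  map_add' := Matrix.mulVec_add G
  map_smul' a x := by
    funext i
    show (Matrix.mulVec G fun j => a • x j) i = a • Matrix.mulVec G x i
    simp only [Matrix.mulVec, dotProduct, ← HahnSeries.single_zero_mul_eq_smul,
      Finset.mul_sum]
    exact Finset.sum_congr rfl fun j _ => by ring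

lemma mulVecA_apply (G : Matrix (Fin N) (Fin N) (LaurentSeries A))
    (x : Fin N → LaurentSeries A) : mulVecA G x = G.mulVec x := rfl

/-- The key projector: `x ↦ g · P₊(g⁻¹ · x)`. -/
def sigmaMap (G Gi : Matrix (Fin N) (Fin N) (LaurentSeries A)) :
    (Fin N → LaurentSeries A) →ₗ[A] (Fin N → LaurentSeries A) :=
  (mulVecA G) ∘ₗ (LinearMap.pi fun i => posPart ∘ₗ LinearMap.proj i) ∘ₗ (mulVecA Gi)

lemma sigmaMap_apply (G Gi : Matrix (Fin N) (Fin N) (LaurentSeries A))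
    (x : Fin N → LaurentSeries A) :
    sigmaMap G Gi x = G.mulVec (fun i => posPart (Gi.mulVec x i)) := rfl

lemma sigma_mem (G Gi : Matrix (Fin N) (Fin N) (LaurentSeries A))
    (x : Fin N → LaurentSeries A) : sigmaMap G Gi x ∈ matLattice G :=
  ⟨fun i => posPart (Gi.mulVec x i), mem_std_iff.2 fun i => bdd_posPart _, rfl⟩

lemma sigma_fix_mat {G Gi : Matrix (Fin N) (Fin N) (LaurentSeries A)}
    (h2 : Gi * G = 1) {x : Fin N → LaurentSeries A} (hx : x ∈ matLattice G) :
    sigmaMap G Gi x = x := by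
  obtain ⟨y, hy, rfl⟩ := hx
  rw [sigmaMap_apply]
  have hy2 : Gi.mulVec (G.mulVec y) = y := by
    rw [Matrix.mulVec_mulVec, h2, Matrix.one_mulVec]
  simp only [hy2]
  have : (fun i => posPart (y i)) = y := funext fun i => posPart_eq_self (mem_std_iff.1 hy i)
  rw [this]

lemma sigma_fix_bdd {n : ℕ} {G Gi : Matrix (Fin N) (Fin N) (LaurentSeries A)}
    (h1 : G * Gi = 1) (hGi : ∀ i j, bdd (-(n : ℤ)) (Gi i j))
    {x : Fin N → LaurentSeries A} (hx : ∀ i, bdd (n : ℤ) (x i)) :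
    sigmaMap G Gi x = x := by
  rw [sigmaMap_apply]
  have h0 : ∀ i, bdd 0 (Gi.mulVec x i) := by
    intro i
    have := bdd_mulVec hGi hx i
    simpa using this
  have : (fun i => posPart (Gi.mulVec x i)) = Gi.mulVec x := by
    funext i; exact posPart_eq_self (h0 i)
  rw [this, Matrix.mulVec_mulVec, h1, Matrix.one_mulVec]

end Lemma331Aux

namespace Lemma331Aux

variable {A : Type*} [CommRing A] {N : ℕ}

lemma trunc_diff {n : ℕ} {x : Fin N → LaurentSeries A}
    (hx : ∀ i, bdd (-(n : ℤ)) (x i)) (i : Fin N) :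
    bdd (n : ℤ) (x i - alphaMap n (betaMap n x) i) := by
  intro j hj
  rw [HahnSeries.coeff_sub, alphaMap_apply, coeff_sum]
  by_cases hjn : j < -(n : ℤ)
  · rw [hx i j hjn, Finset.sum_eq_zero, sub_zero]
    intro k _
    refine HahnSeries.coeff_single_of_ne ?_
    have := k.isLt
    omega
  · have hge : 0 ≤ j + (n : ℤ) := by omega
    have hlt : (j + (n : ℤ)).toNat < 2 * n := by omega
    rw [Finset.sum_eq_single (⟨(j + (n : ℤ)).toNat, hlt⟩ : Fin (2 * n))]
    · rw [betaMap_apply]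
      have hidx : -(n : ℤ) + ((⟨(j + (n : ℤ)).toNat, hlt⟩ : Fin (2 * n)) : ℕ) = j := by
        simp only []
        omega
      rw [hidx, HahnSeries.coeff_single_same, sub_self]
    · intro k _ hk
      refine HahnSeries.coeff_single_of_ne fun hjk => hk ?_
      apply Fin.ext
      simp only []
      omega
    · intro habs
      exact absurd (Finset.mem_univ _) habs

theorem main {n : ℕ} {G Gi : Matrix (Fin N) (Fin N) (LaurentSeries A)}
    (h1 : G * Gi = 1) (h2 : Gi * G = 1)
    (hG : ∀ i j, bdd (-(n : ℤ)) (G i j)) (hGi : ∀ i j, bdd (-(n : ℤ)) (Gi i j)) :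
    smulLattice (HahnSeries.single ((n : ℤ)) (1 : A)) ≤ matLattice G ∧
      Module.Finite A
        ↥((matLattice G).map
          (smulLattice (HahnSeries.single ((n : ℤ)) (1 : A)) (N := N)).mkQ) ∧
      Module.Projective A
        ↥((matLattice G).map
          (smulLattice (HahnSeries.single ((n : ℤ)) (1 : A)) (N := N)).mkQ) := by
  classical
  set T := smulLattice (HahnSeries.single ((n : ℤ)) (1 : A)) (N := N) with hTdef
  have hincl : T ≤ matLattice G := by
    intro x hx
    have hxb := mem_smul_iff.1 hx
    refine ⟨Gi.mulVec x, mem_std_iff.2 fun i => ?_, ?_⟩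
    · have := bdd_mulVec hGi hxb i
      simpa using this
    · rw [Matrix.mulVec_mulVec, h1, Matrix.one_mulVec]
  set S := (matLattice G).map T.mkQ with hSdef
  have hker : T ≤ LinearMap.ker (betaMap n (A := A) (N := N)) := by
    intro x hx
    have hxb := mem_smul_iff.1 hx
    rw [LinearMap.mem_ker]
    funext i k
    rw [betaMap_apply]
    refine hxb i _ ?_
    have := k.isLt
    omega
  set βbar := T.liftQ (betaMap n) hker with hβdef
  set ρ := T.mkQ ∘ₗ (sigmaMap G Gi) ∘ₗ (alphaMap n) with hρdef
  have hρS : ∀ f, ρ f ∈ S := fun f => Submodule.mem_map_of_mem (sigma_mem G Gi _)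
  set s : (Fin N → Fin (2 * n) → A) →ₗ[A] S := ρ.codRestrict S hρS with hsdef
  set ι : S →ₗ[A] (Fin N → Fin (2 * n) → A) := βbar ∘ₗ S.subtype with hιdef
  have key : ∀ x ∈ matLattice G,
      T.mkQ (sigmaMap G Gi (alphaMap n (betaMap n x))) = T.mkQ x := by
    intro x hx
    have hxc : ∀ i, bdd (-(n : ℤ)) (x i) := by
      obtain ⟨y, hy, rfl⟩ := hx
      intro i
      have := bdd_mulVec hG (mem_std_iff.1 hy) i
      simpa using this
    have hdiffT : x - alphaMap n (betaMap n x) ∈ T :=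
      mem_smul_iff.2 fun i => by simpa using trunc_diff hxc i
    have hσdiff : sigmaMap G Gi (x - alphaMap n (betaMap n x))
        = x - alphaMap n (betaMap n x) :=
      sigma_fix_bdd h1 hGi fun i => by simpa using trunc_diff hxc i
    have e1 : sigmaMap G Gi x - sigmaMap G Gi (alphaMap n (betaMap n x))
        = x - alphaMap n (betaMap n x) := by
      rw [← map_sub]
      exact hσdiff
    rw [sigma_fix_mat h2 hx] at e1
    have e2 : sigmaMap G Gi (alphaMap n (betaMap n x)) = alphaMap n (betaMap n x) :=
      sub_right_injective e1
    rw [e2, Submodule.mkQ_apply, Submodule.mkQ_apply, Submodule.Quotient.eq]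
    have := T.neg_mem hdiffT
    simpa [neg_sub] using this
  have H : s.comp ι = LinearMap.id := by
    apply LinearMap.ext
    rintro ⟨q, hq⟩
    obtain ⟨x, hx, rfl⟩ := Submodule.mem_map.1 hq
    apply Subtype.ext
    show ρ (βbar (T.mkQ x)) = T.mkQ x
    rw [Submodule.mkQ_apply, hβdef, Submodule.liftQ_apply, hρdef]
    exact key x hx
  have hsurj : Function.Surjective s := fun p => ⟨ι p, LinearMap.ext_iff.1 H p⟩
  refine ⟨hincl, Module.Finite.of_surjective s hsurj, Module.Projective.of_split ι s H⟩

end Lemma331Aux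

open Lemma331Aux

/-- Lemma 3.3.1 in the affine free case: given `g, h ∈ GL_N(A((t)))` there is an
integer `a` with `t^a·L ⊆ g·L` and `t^a·L ⊆ h·L` such that the quotient `A`-modules
`(g·L)/(t^a·L)` and `(h·L)/(t^a·L)` — realized as the images of `g·L` resp. `h·L`
in `A((t))^N / (t^a·L)` — are finitely generated and projective over `A`. -/
theorem lattice_common_sublattice (A : Type*) [CommRing A] (N : ℕ) (hN : 1 ≤ N)
    (g h : Matrix.GeneralLinearGroup (Fin N) (LaurentSeries A)) :
    ∃ a : ℤ,
      smulLattice (HahnSeries.single a (1 : A)) ≤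
          matLattice (g : Matrix (Fin N) (Fin N) (LaurentSeries A)) ∧
        smulLattice (HahnSeries.single a (1 : A)) ≤
          matLattice (h : Matrix (Fin N) (Fin N) (LaurentSeries A)) ∧
        Module.Finite A
          ↥((matLattice (g : Matrix (Fin N) (Fin N) (LaurentSeries A))).map
            (smulLattice (HahnSeries.single a (1 : A)) (N := N)).mkQ) ∧
        Module.Projective A
          ↥((matLattice (g : Matrix (Fin N) (Fin N) (LaurentSeries A))).map
            (smulLattice (HahnSeries.single a (1 : A)) (N := N)).mkQ) ∧
        Module.Finite A
          ↥((matLattice (h : Matrix (Fin N) (Fin N) (LaurentSeries A))).map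
            (smulLattice (HahnSeries.single a (1 : A)) (N := N)).mkQ) ∧
        Module.Projective A
          ↥((matLattice (h : Matrix (Fin N) (Fin N) (LaurentSeries A))).map
            (smulLattice (HahnSeries.single a (1 : A)) (N := N)).mkQ) := by
  obtain ⟨n1, hn1⟩ := exists_bdd_mat (g : Matrix (Fin N) (Fin N) (LaurentSeries A))
  obtain ⟨n2, hn2⟩ := exists_bdd_mat ((g⁻¹ : Matrix.GeneralLinearGroup (Fin N) (LaurentSeries A)) :
    Matrix (Fin N) (Fin N) (LaurentSeries A))
  obtain ⟨n3, hn3⟩ := exists_bdd_mat (h : Matrix (Fin N) (Fin N) (LaurentSeries A))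
  obtain ⟨n4, hn4⟩ := exists_bdd_mat ((h⁻¹ : Matrix.GeneralLinearGroup (Fin N) (LaurentSeries A)) :
    Matrix (Fin N) (Fin N) (LaurentSeries A))
  set n : ℕ := max (max n1 n2) (max n3 n4) with hn
  have e1 : n1 ≤ n := le_trans (le_max_left _ _) (le_max_left _ _)
  have e2 : n2 ≤ n := le_trans (le_max_right _ _) (le_max_left _ _)
  have e3 : n3 ≤ n := le_trans (le_max_left _ _) (le_max_right _ _)
  have e4 : n4 ≤ n := le_trans (le_max_right _ _) (le_max_right _ _)
  have hg1 : ∀ i j, bdd (-(n : ℤ)) ((g : Matrix (Fin N) (Fin N) (LaurentSeries A)) i j) :=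
    fun i j => (hn1 i j).mono (by omega)
  have hg2 : ∀ i j, bdd (-(n : ℤ))
      (((g⁻¹ : Matrix.GeneralLinearGroup (Fin N) (LaurentSeries A)) :
        Matrix (Fin N) (Fin N) (LaurentSeries A)) i j) :=
    fun i j => (hn2 i j).mono (by omega)
  have hh1 : ∀ i j, bdd (-(n : ℤ)) ((h : Matrix (Fin N) (Fin N) (LaurentSeries A)) i j) :=
    fun i j => (hn3 i j).mono (by omega)
  have hh2 : ∀ i j, bdd (-(n : ℤ))
      (((h⁻¹ : Matrix.GeneralLinearGroup (Fin N) (LaurentSeries A)) :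
        Matrix (Fin N) (Fin N) (LaurentSeries A)) i j) :=
    fun i j => (hn4 i j).mono (by omega)
  obtain ⟨ig, fg, pg⟩ := main (Units.mul_inv g) (Units.inv_mul g) hg1 hg2
  obtain ⟨ih, fh, ph⟩ := main (Units.mul_inv h) (Units.inv_mul h) hh1 hh2
  exact ⟨(n : ℤ), ig, ih, fg, pg, fh, ph⟩


end
end

section
/- Let F be a field and N ≥ 1. Then there exist a natural number M and sequences of indices i_1, …, i_M and j_1, …, j_M in {1, …, N} with i_ν ≠ j_ν for every ν, such that every matrix in SL_N(F) can be written as the ordered product e_{i_1 j_1}(a_1) · e_{i_2 j_2}(a_2) ⋯ e_{i_M j_M}(a_M) for some a_1, …, a_M ∈ F, where e_{ij}(a) denotes the elementary matrix equal to the identity except for the entry a in position (i,j). -/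
open Matrix Matrix.TransvectionStruct Matrix.Pivot Sum

namespace SLfix

variable {F : Type*} [Field F] {n : Type*} [DecidableEq n] [Fintype n]

theorem four_trans (i j : n) (hij : i ≠ j) (e : F) (he : e ≠ 0) :
    transvection i j (e - 1) * transvection j i 1 * transvection i j (e⁻¹ - 1) *
      transvection j i (-e) =
    diagonal (fun k => if k = i then e else if k = j then e⁻¹ else 1) := by
  have hji : j ≠ i := hij.symm
  ext a b
  simp only [transvection, Matrix.add_mul, Matrix.mul_add, Matrix.one_mul, Matrix.mul_one,
    Matrix.single_mul_single_same, Matrix.single_mul_single_of_ne, hij, hji, ne_eq, not_false_eq_true,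
    Matrix.add_apply, Matrix.one_apply, diagonal_apply, Matrix.single_apply_same]
  by_cases hai : a = i <;> by_cases haj : a = j <;> by_cases hbi : b = i <;>
    by_cases hbj : b = j <;> by_cases hab : a = b <;>
    simp_all [Matrix.single] <;> (try split_ifs) <;> (try simp_all) <;> (try field_simp) <;> (try ring)


/-- realize a matrix as a product of transvections along a fixed word of positions -/
def Real (L : List (n × n)) (g : Matrix n n F) : Prop :=
  ∃ a : List F, a.length = L.length ∧
    g = (List.zipWith (fun p c => transvection p.1 p.2 c) L a).prod

theorem real_nil : Real ([] : List (n × n)) (1 : Matrix n n F) := ⟨[], rfl, by simp⟩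

theorem real_cons {L : List (n × n)} {g : Matrix n n F} (p : n × n) (c : F)
    (h : Real L g) : Real (p :: L) (transvection p.1 p.2 c * g) := by
  obtain ⟨a, ha, rfl⟩ := h
  exact ⟨c :: a, by simp [ha], by simp⟩

theorem real_append {L₁ L₂ : List (n × n)} {g₁ g₂ : Matrix n n F}
    (h₁ : Real L₁ g₁) (h₂ : Real L₂ g₂) : Real (L₁ ++ L₂) (g₁ * g₂) := by
  obtain ⟨a₁, ha₁, rfl⟩ := h₁
  obtain ⟨a₂, ha₂, rfl⟩ := h₂
  exact ⟨a₁ ++ a₂, by simp [ha₁, ha₂],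
    by rw [List.zipWith_append ha₁.symm, List.prod_append]⟩

theorem real_one (L : List (n × n)) : Real L (1 : Matrix n n F) := by
  refine ⟨List.replicate L.length 0, by simp, ?_⟩
  induction L with
  | nil => simp
  | cons p L ih => simpa using ih.symm ▸ by simp [List.replicate_succ]

/-- the universal block: all off-diagonal positions -/
noncomputable def blockL (n : Type*) [DecidableEq n] [Fintype n] : List (n × n) :=
  (Finset.univ.filter fun p : n × n => p.1 ≠ p.2).toList

theorem mem_blockL {p : n × n} (hp : p.1 ≠ p.2) : p ∈ blockL n := by
  simp [blockL, hp]

theorem ne_of_mem_blockL {p : n × n} (hp : p ∈ blockL n) : p.1 ≠ p.2 := by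
  simpa [blockL] using hp

theorem real_blockL {p : n × n} (hp : p.1 ≠ p.2) (c : F) :
    Real (blockL n) (transvection p.1 p.2 c) := by
  obtain ⟨s, t, hst⟩ := List.append_of_mem (mem_blockL hp)
  rw [hst]
  have : transvection p.1 p.2 c = (1 : Matrix n n F) * (transvection p.1 p.2 c * 1) := by
    simp
  rw [this]
  exact real_append (real_one s) (real_cons p c (real_one t))

noncomputable def blocksL (n : Type*) [DecidableEq n] [Fintype n] (K : ℕ) : List (n × n) :=
  (List.replicate K (blockL n)).flatten

theorem ne_of_mem_blocksL {K : ℕ} {p : n × n} (hp : p ∈ blocksL n K) : p.1 ≠ p.2 := by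
  simp only [blocksL, List.mem_flatten] at hp
  obtain ⟨l, hl, hpl⟩ := hp
  exact ne_of_mem_blockL ((List.eq_of_mem_replicate hl) ▸ hpl)

theorem real_blocksL {K : ℕ} {L : List (TransvectionStruct n F)} (h : L.length ≤ K) :
    Real (blocksL n K) ((L.map toMatrix).prod) := by
  induction K generalizing L with
  | zero =>
    rw [List.length_eq_zero_iff.mp (Nat.le_zero.mp h)]
    exact real_nil
  | succ K ih =>
    match L with
    | [] => exact real_one _
    | t :: L =>
      have : blocksL n (K + 1) = blockL n ++ blocksL n K := by
        simp [blocksL, List.replicate_succ]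
      rw [this]
      simp only [List.map_cons, List.prod_cons]
      have hb : Real (blockL n) (toMatrix t) := real_blockL (p := (t.i, t.j)) t.hij t.c
      exact real_append hb (ih (Nat.succ_le_succ_iff.mp h))

theorem real_flatten (lp : List (List (n × n) × Matrix n n F))
    (h : ∀ q ∈ lp, Real q.1 q.2) :
    Real ((lp.map Prod.fst).flatten) ((lp.map Prod.snd).prod) := by
  induction lp with
  | nil => simpa using real_nil
  | cons q lp ih =>
    simp only [List.map_cons, List.flatten_cons, List.prod_cons]
    exact real_append (h q (by simp)) (ih fun q hq => h q (by simp [hq]))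


/-- the two-coordinate diagonal matrix -/
def dmat (i j : n) (e : F) : Matrix n n F :=
  diagonal (fun k => if k = i then e else if k = j then e⁻¹ else 1)

theorem real_dmat {i j : n} (hij : i ≠ j) {e : F} (he : e ≠ 0) :
    Real [(i, j), (j, i), (i, j), (j, i)] (dmat i j e : Matrix n n F) := by
  have h := four_trans i j hij e he
  have : dmat i j e = transvection i j (e - 1) * (transvection j i 1 *
      (transvection i j (e⁻¹ - 1) * (transvection j i (-e) * 1))) := by
    unfold dmat; rw [← h]; noncomm_ring
  rw [this]
  exact real_cons (i,j) _ (real_cons (j,i) _ (real_cons (i,j) _ (real_cons (j,i) _ real_nil)))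

theorem prod_dmat {m : ℕ} (e : Fin m → F) (l : List (Fin m)) (hl : l.Nodup) :
    (l.map fun k => (dmat (0 : Fin (m + 1)) k.succ (e k) : Matrix _ _ F)).prod =
      diagonal (Fin.cases ((l.map e).prod) (fun k' => if k' ∈ l then (e k')⁻¹ else 1)) := by
  induction l with
  | nil =>
    simp only [List.map_nil, List.prod_nil, List.not_mem_nil, if_false]
    rw [← diagonal_one]
    rw [diagonal_eq_diagonal_iff]
    intro x
    induction x using Fin.cases <;> simp
  | cons k l ih =>
    have hk : k ∉ l := (List.nodup_cons.mp hl).1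
    rw [List.map_cons, List.prod_cons, ih (List.nodup_cons.mp hl).2, dmat,
      diagonal_mul_diagonal, diagonal_eq_diagonal_iff]
    intro x
    induction x using Fin.cases with
    | zero => simp [Fin.succ_ne_zero k, (Fin.succ_ne_zero k).symm]
    | succ k' =>
      rcases eq_or_ne k' k with rfl | hkk
      · simp [hk, Fin.succ_ne_zero]
      · simp [Fin.succ_ne_zero, (Fin.succ_injective m).ne hkk, hkk]

/-- the fixed word realizing all determinant-one diagonal matrices -/
def diagWord (m : ℕ) : List (Fin (m + 1) × Fin (m + 1)) :=
  (((List.finRange m).map fun k =>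
    [((0 : Fin (m+1)), k.succ), (k.succ, 0), (0, k.succ), (k.succ, 0)]).flatten)

theorem ne_of_mem_diagWord {m : ℕ} {p : Fin (m+1) × Fin (m+1)} (hp : p ∈ diagWord m) :
    p.1 ≠ p.2 := by
  simp only [diagWord, List.mem_flatten, List.mem_map] at hp
  obtain ⟨l, ⟨k, _, rfl⟩, hpl⟩ := hp
  have := Fin.succ_ne_zero k
  simp only [List.mem_cons, List.not_mem_nil, or_false] at hpl
  rcases hpl with rfl | rfl | rfl | rfl <;>
    simp [Fin.succ_ne_zero k, (Fin.succ_ne_zero k).symm]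

theorem real_diag {m : ℕ} (D : Fin (m + 1) → F) (hD : ∀ i, D i ≠ 0)
    (hdet : ∏ i, D i = 1) : Real (diagWord m) (diagonal D) := by
  have key := real_flatten (n := Fin (m+1)) (F := F)
    ((List.finRange m).map fun k =>
      ([((0 : Fin (m+1)), k.succ), (k.succ, 0), (0, k.succ), (k.succ, 0)],
        dmat 0 k.succ (D k.succ)⁻¹))
    (by
      rintro q hq
      simp only [List.mem_map] at hq
      obtain ⟨k, _, rfl⟩ := hq
      exact real_dmat (Fin.succ_ne_zero k).symm (inv_ne_zero (hD k.succ)))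
  rw [List.map_map, List.map_map] at key
  have h1 : ((List.finRange m).map (Prod.fst ∘ fun k =>
      ([((0 : Fin (m+1)), k.succ), (k.succ, 0), (0, k.succ), (k.succ, 0)],
        (dmat 0 k.succ (D k.succ)⁻¹ : Matrix _ _ F)))).flatten = diagWord m := rfl
  have h2 : ((List.finRange m).map (Prod.snd ∘ fun k =>
      ([((0 : Fin (m+1)), k.succ), (k.succ, 0), (0, k.succ), (k.succ, 0)],
        (dmat 0 k.succ (D k.succ)⁻¹ : Matrix _ _ F)))).prod = diagonal D := by
    show ((List.finRange m).map fun k => (dmat (0 : Fin (m+1)) k.succ (D k.succ)⁻¹ :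
      Matrix _ _ F)).prod = diagonal D
    have := prod_dmat (fun k : Fin m => (D k.succ)⁻¹) (List.finRange m) (List.nodup_finRange m)
    rw [this, diagonal_eq_diagonal_iff]
    intro x
    induction x using Fin.cases with
    | zero =>
      simp only [Fin.cases_zero]
      have h3 : ((List.finRange m).map fun k => (D k.succ)⁻¹).prod
          = (∏ k : Fin m, D k.succ)⁻¹ := by
        rw [← Fin.prod_univ_def]
        exact Finset.prod_inv_distrib (fun k : Fin m => D k.succ)
      rw [h3]
      have h0 : D 0 * ∏ k : Fin m, D k.succ = 1 := by
        rw [← Fin.prod_univ_succ]; exact hdet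
      exact inv_eq_of_mul_eq_one_left h0
    | succ k' => simp [List.mem_finRange, inv_inv]
  rw [h1, h2] at key
  exact key


theorem twoblock_bounded {r : ℕ} (M : Matrix (Fin r ⊕ Unit) (Fin r ⊕ Unit) F) :
    ∃ L L' : List (TransvectionStruct (Fin r ⊕ Unit) F),
      L.length ≤ r + 1 ∧ L'.length ≤ r + 1 ∧
      IsTwoBlockDiagonal ((L.map toMatrix).prod * M * (L'.map toMatrix).prod) := by
  have main : ∀ N : Matrix (Fin r ⊕ Unit) (Fin r ⊕ Unit) F,
      N (inr Unit.unit) (inr Unit.unit) ≠ 0 →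
      ∃ L L' : List (TransvectionStruct (Fin r ⊕ Unit) F),
        L.length = r ∧ L'.length = r ∧
        IsTwoBlockDiagonal ((L.map toMatrix).prod * N * (L'.map toMatrix).prod) := by
    intro N hN
    let L : List (TransvectionStruct (Fin r ⊕ Unit) F) :=
      List.ofFn fun i : Fin r =>
        ⟨inl i, inr Unit.unit, by simp, -N (inl i) (inr Unit.unit) / N (inr Unit.unit) (inr Unit.unit)⟩
    let L' : List (TransvectionStruct (Fin r ⊕ Unit) F) :=
      List.ofFn fun i : Fin r =>
        ⟨inr Unit.unit, inl i, by simp, -N (inr Unit.unit) (inl i) / N (inr Unit.unit) (inr Unit.unit)⟩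
    refine ⟨L, L', by simp [L], by simp [L'], ?_⟩
    have A : L.map toMatrix = listTransvecCol N := by simp [L, listTransvecCol, Function.comp_def]
    have B : L'.map toMatrix = listTransvecRow N := by simp [L', listTransvecRow, Function.comp_def]
    rw [A, B]
    exact isTwoBlockDiagonal_listTransvecCol_mul_mul_listTransvecRow N hN
  by_cases H : IsTwoBlockDiagonal M
  · exact ⟨List.nil, List.nil, by simp, by simp, by simpa using H⟩
  by_cases hM : M (inr Unit.unit) (inr Unit.unit) ≠ 0
  · obtain ⟨L, L', h1, h2, h3⟩ := main M hM
    exact ⟨L, L', by omega, by omega, h3⟩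
  push_neg at hM
  simp only [not_and_or, IsTwoBlockDiagonal, toBlocks₁₂, toBlocks₂₁, ← Matrix.ext_iff] at H
  have : ∃ i : Fin r, M (inl i) (inr Unit.unit) ≠ 0 ∨ M (inr Unit.unit) (inl i) ≠ 0 := by
    cases' H with H H
    · contrapose! H
      rintro i ⟨⟩
      exact (H i).1
    · contrapose! H
      rintro ⟨⟩ j
      exact (H j).2
  rcases this with ⟨i, h | h⟩
  · let M' := transvection (inr Unit.unit) (inl i) 1 * M
    have hM' : M' (inr Unit.unit) (inr Unit.unit) ≠ 0 := by simpa [M', hM]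
    rcases main M' hM' with ⟨L, L', h1, h2, hLL'⟩
    rw [Matrix.mul_assoc] at hLL'
    refine ⟨L ++ [⟨inr Unit.unit, inl i, by simp, 1⟩], L', by simp [h1], by omega, ?_⟩
    simp only [List.map_append, List.prod_append, Matrix.mul_one, toMatrix_mk, List.prod_cons,
      List.prod_nil, List.map, Matrix.mul_assoc (L.map toMatrix).prod]
    exact hLL'
  · let M' := M * transvection (inl i) (inr Unit.unit) 1
    have hM' : M' (inr Unit.unit) (inr Unit.unit) ≠ 0 := by simpa [M', hM]
    rcases main M' hM' with ⟨L, L', h1, h2, hLL'⟩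
    refine ⟨L, ⟨inl i, inr Unit.unit, by simp, 1⟩::L', by omega, by simp [h2], ?_⟩
    simp only [← Matrix.mul_assoc, toMatrix_mk, List.prod_cons, List.map]
    rw [Matrix.mul_assoc (L.map toMatrix).prod]
    exact hLL'

theorem step_bounded {r K : ℕ}
    (IH : ∀ M : Matrix (Fin r) (Fin r) F,
      ∃ (L₀ L₀' : List (TransvectionStruct (Fin r) F)) (D₀ : Fin r → F),
        L₀.length ≤ K ∧ L₀'.length ≤ K ∧
        (L₀.map toMatrix).prod * M * (L₀'.map toMatrix).prod = diagonal D₀)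
    (M : Matrix (Fin r ⊕ Unit) (Fin r ⊕ Unit) F) :
    ∃ (L L' : List (TransvectionStruct (Fin r ⊕ Unit) F)) (D : Fin r ⊕ Unit → F),
      L.length ≤ K + (r + 1) ∧ L'.length ≤ K + (r + 1) ∧
      (L.map toMatrix).prod * M * (L'.map toMatrix).prod = diagonal D := by
  rcases twoblock_bounded M with ⟨L₁, L₁', hl1, hl1', hM⟩
  let M' := (L₁.map toMatrix).prod * M * (L₁'.map toMatrix).prod
  let M'' := toBlocks₁₁ M'
  rcases IH M'' with ⟨L₀, L₀', D₀, hL₀, hL₀', h₀⟩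
  set c := M' (inr Unit.unit) (inr Unit.unit)
  refine
    ⟨L₀.map (sumInl Unit) ++ L₁, L₁' ++ L₀'.map (sumInl Unit),
      Sum.elim D₀ fun _ => M' (inr Unit.unit) (inr Unit.unit),
      by simp; omega, by simp; omega, ?_⟩
  suffices (L₀.map (toMatrix ∘ sumInl Unit)).prod * M' * (L₀'.map (toMatrix ∘ sumInl Unit)).prod =
      diagonal (Sum.elim D₀ fun _ => c) by
    simpa [M', c, Matrix.mul_assoc]
  have : M' = fromBlocks M'' 0 0 (diagonal fun _ => c) := by
    rw [← fromBlocks_toBlocks M', hM.1, hM.2]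
    rfl
  rw [this]
  simp [h₀]

theorem reindex_bounded_aux {p q : Type*} [Fintype p] [Fintype q] [DecidableEq p] [DecidableEq q]
    {K : ℕ} (M : Matrix p p F) (e : p ≃ q)
    (H : ∃ (L L' : List (TransvectionStruct q F)) (D : q → F),
        L.length ≤ K ∧ L'.length ≤ K ∧
        (L.map toMatrix).prod * Matrix.reindexAlgEquiv F _ e M * (L'.map toMatrix).prod =
          diagonal D) :
    ∃ (L L' : List (TransvectionStruct p F)) (D : p → F),
      L.length ≤ K ∧ L'.length ≤ K ∧
      (L.map toMatrix).prod * M * (L'.map toMatrix).prod = diagonal D := by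
  rcases H with ⟨L₀, L₀', D₀, hl, hl', h₀⟩
  refine ⟨L₀.map (reindexEquiv e.symm), L₀'.map (reindexEquiv e.symm), D₀ ∘ e,
    by simpa using hl, by simpa using hl', ?_⟩
  have : M = reindexAlgEquiv F _ e.symm (reindexAlgEquiv F _ e M) := by
    simp only [Equiv.symm_symm, submatrix_submatrix, reindex_apply, submatrix_id_id,
      Equiv.symm_comp_self, reindexAlgEquiv_apply]
  rw [this]
  simp only [toMatrix_reindexEquiv_prod, List.map_map, reindexAlgEquiv_apply]
  simp only [← reindexAlgEquiv_apply F, ← reindexAlgEquiv_mul, h₀]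
  simp only [Equiv.symm_symm, reindex_apply, submatrix_diagonal_equiv, reindexAlgEquiv_apply]

theorem bounded_diag (r : ℕ) :
    ∃ K : ℕ, ∀ M : Matrix (Fin r) (Fin r) F,
      ∃ (L L' : List (TransvectionStruct (Fin r) F)) (D : Fin r → F),
        L.length ≤ K ∧ L'.length ≤ K ∧
        (L.map toMatrix).prod * M * (L'.map toMatrix).prod = diagonal D := by
  induction r with
  | zero =>
    refine ⟨0, fun M => ⟨[], [], fun _ => 1, le_rfl, le_rfl, ?_⟩⟩
    ext i j
    exact i.elim0
  | succ r IH =>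
    obtain ⟨K, hK⟩ := IH
    refine ⟨K + (r + 1), fun M => ?_⟩
    have e : Fin (r + 1) ≃ Fin r ⊕ Unit := by
      refine Fintype.equivOfCardEq ?_
      simp
    exact reindex_bounded_aux M e (step_bounded hK (Matrix.reindexAlgEquiv F _ e M))



theorem sl_decomp (r : ℕ) :
    ∃ K : ℕ, ∀ M : Matrix (Fin r) (Fin r) F, M.det = 1 →
      ∃ (E E' : List (TransvectionStruct (Fin r) F)) (D : Fin r → F),
        E.length ≤ K ∧ E'.length ≤ K ∧ (∀ i, D i ≠ 0) ∧ (∏ i, D i) = 1 ∧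
        M = (E.map toMatrix).prod * diagonal D * (E'.map toMatrix).prod := by
  obtain ⟨K, hK⟩ := bounded_diag (F := F) r
  refine ⟨K, fun M hM => ?_⟩
  obtain ⟨L, L', D, hl, hl', h⟩ := hK M
  have hdet : (∏ i, D i) = 1 := by
    have := congrArg Matrix.det h
    simpa [det_mul, hM] using this.symm
  have hD : ∀ i, D i ≠ 0 := by
    have h0 : (∏ i, D i) ≠ 0 := by rw [hdet]; exact one_ne_zero
    intro i hi
    exact h0 (Finset.prod_eq_zero (Finset.mem_univ i) hi)
  refine ⟨L.reverse.map TransvectionStruct.inv, L'.reverse.map TransvectionStruct.inv, D,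
    by simpa using hl, by simpa using hl', hD, hdet, ?_⟩
  suffices
    M =
      (L.reverse.map (toMatrix ∘ TransvectionStruct.inv)).prod * (L.map toMatrix).prod * M *
        ((L'.map toMatrix).prod * (L'.reverse.map (toMatrix ∘ TransvectionStruct.inv)).prod)
    by simpa [← h, Matrix.mul_assoc]
  rw [reverse_inv_prod_mul_prod, prod_mul_reverse_inv_prod, Matrix.one_mul, Matrix.mul_one]

end SLfix

open SLfix Matrix Matrix.TransvectionStruct in
/-- The claim from the proof of Lemma 5.4.6: for a field `F` and `N ≥ 1` there are a
natural number `M` and a fixed sequence of index pairs `(i_ν, j_ν)` with `i_ν ≠ j_ν`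
such that every matrix in `SL_N(F)` is the ordered product
`e_{i_1 j_1}(a_1) ⋯ e_{i_M j_M}(a_M)` of elementary matrices, for some
`a_1, …, a_M ∈ F`. -/
theorem sl_product_of_fixed_transvections (F : Type*) [Field F] (N : ℕ) (hN : 1 ≤ N) :
    ∃ (M : ℕ) (ij : Fin M → Fin N × Fin N),
      (∀ ν, (ij ν).1 ≠ (ij ν).2) ∧
      ∀ g : Matrix.SpecialLinearGroup (Fin N) F,
        ∃ a : Fin M → F,
          (g : Matrix (Fin N) (Fin N) F) =
            (List.ofFn fun ν => Matrix.transvection (ij ν).1 (ij ν).2 (a ν)).prod := by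
  obtain ⟨n, rfl⟩ : ∃ n, N = n + 1 := ⟨N - 1, (Nat.succ_pred_eq_of_pos hN).symm⟩
  obtain ⟨K, hK⟩ := sl_decomp (F := F) (n + 1)
  set W : List (Fin (n+1) × Fin (n+1)) :=
    blocksL (Fin (n+1)) K ++ (diagWord n ++ blocksL (Fin (n+1)) K) with hW
  have hWne : ∀ p ∈ W, p.1 ≠ p.2 := by
    intro p hp
    rw [hW] at hp
    rcases List.mem_append.mp hp with h | h
    · exact ne_of_mem_blocksL h
    · rcases List.mem_append.mp h with h | h
      · exact ne_of_mem_diagWord h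
      · exact ne_of_mem_blocksL h
  refine ⟨W.length, fun ν => W.get ν, fun ν => hWne _ (W.get_mem ν), fun g => ?_⟩
  obtain ⟨E, E', D, hE, hE', hD, hdet, hg⟩ := hK (g : Matrix (Fin (n+1)) (Fin (n+1)) F) g.prop
  have hreal : Real W ((g : Matrix (Fin (n+1)) (Fin (n+1)) F)) := by
    rw [hg, Matrix.mul_assoc]
    exact real_append (real_blocksL hE)
      (real_append (real_diag D hD hdet) (real_blocksL hE'))
  obtain ⟨a, ha, hprod⟩ := hreal
  refine ⟨fun ν => a.get (Fin.cast ha.symm ν), ?_⟩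
  rw [hprod]
  congr 1
  apply List.ext_getElem
  · simp [ha]
  · intro k h1 h2
    simp [List.getElem_zipWith, List.getElem_ofFn]
end
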